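/- arXiv:1004.1386 — 6 statements merged into one kernel-verified Lean document; each statement's English description precedes it below -/
import Mathlib

section
/- Let H_A, H_B be separable Hilbert spaces, ρ_AB a positive trace-class operator on H_A ⊗ H_B, and σ_B a positive trace-class operator on H_B. Define Λ(ρ_AB|σ_B) = inf{λ ∈ ℝ : λ·(id_A ⊗ σ_B) ≥ ρ_AB} (with inf ∅ = +∞). Then Λ is lower semicontinuous in the pair (ρ_AB, σ_B) with respect to the product of the trace-norm topologies; equivalently, every lower level set {(ρ, σ) : Λ(ρ|σ) ≤ t} is closed. -/
open scoped InnerProductSpace ComplexOrder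
open ContinuousLinearMap Filter Topology

set_option synthInstance.maxHeartbeats 1000000
set_option maxHeartbeats 1600000

noncomputable section

/-- The rank-one operator `|x⟩⟨y|`. -/
def dyad {H : Type*} [NormedAddCommGroup H] [InnerProductSpace ℂ H] (x y : H) :
    H →L[ℂ] H := (innerSL ℂ y).smulRight x

/-- The trace of an operator along a Hilbert basis (sum of real parts of the diagonal). -/
def trAlong {H : Type*} [NormedAddCommGroup H] [InnerProductSpace ℂ H] {ι : Type*}
    (e : HilbertBasis ι ℂ H) (T : H →L[ℂ] H) : ℝ :=
  ∑' i, RCLike.re ⟪e i, T (e i)⟫_ℂ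

/-- The complex trace of an operator along a Hilbert basis. -/
def trCAlong {H : Type*} [NormedAddCommGroup H] [InnerProductSpace ℂ H] {ι : Type*}
    (e : HilbertBasis ι ℂ H) (T : H →L[ℂ] H) : ℂ :=
  ∑' i, ⟪e i, T (e i)⟫_ℂ

/-- The absolute value `√(T†T)` of a bounded operator. -/
def absOp {H : Type*} [NormedAddCommGroup H] [InnerProductSpace ℂ H] [CompleteSpace H]
    (T : H →L[ℂ] H) : H →L[ℂ] H := CFC.sqrt (ContinuousLinearMap.adjoint T * T)

/-- The trace norm `‖T‖₁ = tr √(T†T)` along a Hilbert basis. -/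
def trNormAlong {H : Type*} [NormedAddCommGroup H] [InnerProductSpace ℂ H] [CompleteSpace H]
    {ι : Type*} (e : HilbertBasis ι ℂ H) (T : H →L[ℂ] H) : ℝ :=
  trAlong e (absOp T)

/-- `T` is trace class (w.r.t. the Hilbert basis `e`): the diagonal sum of `√(T†T)` converges. -/
def IsTraceClass {H : Type*} [NormedAddCommGroup H] [InnerProductSpace ℂ H] [CompleteSpace H]
    {ι : Type*} (e : HilbertBasis ι ℂ H) (T : H →L[ℂ] H) : Prop :=
  Summable fun i => RCLike.re ⟪e i, absOp T (e i)⟫_ℂ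

/-- An orthogonal projection: a self-adjoint idempotent bounded operator. -/
def IsOrthoProj {H : Type*} [NormedAddCommGroup H] [InnerProductSpace ℂ H] [CompleteSpace H]
    (P : H →L[ℂ] H) : Prop := IsSelfAdjoint P ∧ IsIdempotentElem P

/-- A realization of the Hilbert-space tensor product `H = H_A ⊗ H_B`: a bilinear map
`tmul` compatible with the inner products, with total range, together with the induced
tensor product `map` of bounded operators. -/
structure HilbertTensor (HA HB H : Type*) [NormedAddCommGroup HA] [InnerProductSpace ℂ HA]
    [NormedAddCommGroup HB] [InnerProductSpace ℂ HB]
    [NormedAddCommGroup H] [InnerProductSpace ℂ H] where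
  tmul : HA →ₗ[ℂ] HB →ₗ[ℂ] H
  inner_tmul : ∀ (a a' : HA) (b b' : HB),
    ⟪tmul a b, tmul a' b'⟫_ℂ = ⟪a, a'⟫_ℂ * ⟪b, b'⟫_ℂ
  dense_span : Dense ((Submodule.span ℂ {z : H | ∃ a b, z = tmul a b} : Submodule ℂ H) : Set H)
  map : (HA →L[ℂ] HA) → (HB →L[ℂ] HB) → (H →L[ℂ] H)
  map_tmul : ∀ (S : HA →L[ℂ] HA) (T : HB →L[ℂ] HB) (a : HA) (b : HB),
    map S T (tmul a b) = tmul (S a) (T b)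

/-- `Λ(ρ_AB|B) = inf { tr σ̃ : σ̃ ≥ 0 trace class, id_A ⊗ σ̃ ≥ ρ_AB }`, valued in `EReal`
(the infimum of the empty set being `⊤`, i.e. `H_min = -∞`). -/
def LamB {HA HB H : Type*} [NormedAddCommGroup HA] [InnerProductSpace ℂ HA]
    [NormedAddCommGroup HB] [InnerProductSpace ℂ HB] [CompleteSpace HB]
    [NormedAddCommGroup H] [InnerProductSpace ℂ H] [CompleteSpace H]
    (TP : HilbertTensor HA HB H) {κ : Type*} (f : HilbertBasis κ ℂ HB)
    (ρ : H →L[ℂ] H) : EReal :=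
  sInf {x : EReal | ∃ σ : HB →L[ℂ] HB, σ.IsPositive ∧ IsTraceClass f σ ∧
    ρ ≤ TP.map 1 σ ∧ x = (trAlong f σ : EReal)}

/-- `Λ(ρ_AB|σ_B) = inf { λ ∈ ℝ : λ·(id_A ⊗ σ_B) ≥ ρ_AB }`, valued in `EReal`. -/
def LamCond {HA HB H : Type*} [NormedAddCommGroup HA] [InnerProductSpace ℂ HA]
    [NormedAddCommGroup HB] [InnerProductSpace ℂ HB]
    [NormedAddCommGroup H] [InnerProductSpace ℂ H] [CompleteSpace H]
    (TP : HilbertTensor HA HB H) (ρ : H →L[ℂ] H) (σ : HB →L[ℂ] HB) : EReal :=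
  sInf {x : EReal | ∃ l : ℝ, x = (l : EReal) ∧ ρ ≤ l • TP.map 1 σ}

/-- The generalized fidelity `F̄(ρ,σ) = ‖√ρ√σ‖₁ + √((1-tr ρ)(1-tr σ))`. -/
def genFid {H : Type*} [NormedAddCommGroup H] [InnerProductSpace ℂ H] [CompleteSpace H]
    {ι : Type*} (e : HilbertBasis ι ℂ H) (ρ σ : H →L[ℂ] H) : ℝ :=
  trNormAlong e (CFC.sqrt ρ * CFC.sqrt σ) +
    Real.sqrt ((1 - trAlong e ρ) * (1 - trAlong e σ))

/-- The purified distance `P(ρ,σ) = √(1 - F̄(ρ,σ)²)`. -/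
def purifiedDist {H : Type*} [NormedAddCommGroup H] [InnerProductSpace ℂ H] [CompleteSpace H]
    {ι : Type*} (e : HilbertBasis ι ℂ H) (ρ σ : H →L[ℂ] H) : ℝ :=
  Real.sqrt (1 - (genFid e ρ σ) ^ 2)

/-- Positivity of a square matrix of operators, viewed as an operator on `Hⁿ`. -/
def MatPos {H : Type*} [NormedAddCommGroup H] [InnerProductSpace ℂ H] (n : ℕ)
    (M : Matrix (Fin n) (Fin n) (H →L[ℂ] H)) : Prop :=
  ∀ v : Fin n → H, 0 ≤ ∑ i, ∑ j, ⟪v i, M i j (v j)⟫_ℂ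

/-- Complete positivity of a linear map on operators. -/
def IsCPMap {H : Type*} [NormedAddCommGroup H] [InnerProductSpace ℂ H]
    (E : (H →L[ℂ] H) →ₗ[ℂ] (H →L[ℂ] H)) : Prop :=
  ∀ (n : ℕ) (M : Matrix (Fin n) (Fin n) (H →L[ℂ] H)),
    MatPos n M → MatPos n (fun i j => E (M i j))

end

noncomputable section AuxLemmas
variable {E : Type*} [NormedAddCommGroup E] [InnerProductSpace ℂ E] [CompleteSpace E]
set_option linter.unusedSectionVars false

lemma inner_symm_of_sa {A : E →L[ℂ] E} (hA : IsSelfAdjoint A) (x y : E) :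
    ⟪A x, y⟫_ℂ = ⟪x, A y⟫_ℂ := ((isSelfAdjoint_iff_isSymmetric).mp hA) x y

lemma diag_nonneg {A : E →L[ℂ] E} (hA : 0 ≤ A) (x : E) : 0 ≤ RCLike.re ⟪x, A x⟫_ℂ :=
  ((nonneg_iff_isPositive A).mp hA).re_inner_nonneg_right x

/-- quadratic form of a nonneg operator as norm of sqrt. -/
lemma quad_eq_norm_sq {A : E →L[ℂ] E} (hA : 0 ≤ A) (x : E) :
    ⟪x, A x⟫_ℂ = (‖CFC.sqrt A x‖ : ℂ) ^ 2 := by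
  have hs : CFC.sqrt A * CFC.sqrt A = A := CFC.sqrt_mul_sqrt_self A hA
  have hsa : IsSelfAdjoint (CFC.sqrt A) := IsSelfAdjoint.of_nonneg (CFC.sqrt_nonneg _)
  conv_lhs => rw [← hs]
  calc ⟪x, (CFC.sqrt A * CFC.sqrt A) x⟫_ℂ = ⟪x, CFC.sqrt A (CFC.sqrt A x)⟫_ℂ := rfl
    _ = ⟪CFC.sqrt A x, CFC.sqrt A x⟫_ℂ := by rw [← inner_symm_of_sa hsa]
    _ = (‖CFC.sqrt A x‖ : ℂ) ^ 2 := by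
        rw [inner_self_eq_norm_sq_to_K]; norm_num

lemma re_quad_eq_norm_sq {A : E →L[ℂ] E} (hA : 0 ≤ A) (x : E) :
    RCLike.re ⟪x, A x⟫_ℂ = ‖CFC.sqrt A x‖ ^ 2 := by
  rw [quad_eq_norm_sq hA x]
  norm_cast

/-- Parseval for a Hilbert basis, real version. -/
lemma parseval_re {ι : Type*} (e : HilbertBasis ι ℂ E) (x : E) :
    HasSum (fun i => ‖⟪e i, x⟫_ℂ‖ ^ 2) (‖x‖ ^ 2) := by
  have h := e.hasSum_inner_mul_inner x x
  have h2 := h.mapL (RCLike.reCLM (K := ℂ))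
  simp only [RCLike.reCLM_apply] at h2
  convert h2 using 2 with i
  · rfl
  · rw [← inner_conj_symm x (e i)]
    rw [RCLike.conj_mul]
    simp [RCLike.normSq_eq_def']
    norm_cast
  · rw [inner_self_eq_norm_sq_to_K (𝕜 := ℂ)]
    norm_cast

/-- diagonal entry of a nonneg operator. -/
lemma diag_eq_norm_sq {A : E →L[ℂ] E} (hA : 0 ≤ A) (x : E) :
    RCLike.re ⟪x, A x⟫_ℂ = ‖CFC.sqrt A x‖ ^ 2 := re_quad_eq_norm_sq hA x

/-- L1: quadratic form of a positive diag-summable operator is bounded by the trace. -/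
lemma quad_le_tr {ι : Type*} (e : HilbertBasis ι ℂ E) {A : E →L[ℂ] E} (hA : 0 ≤ A)
    (hsum : Summable fun i => RCLike.re ⟪e i, A (e i)⟫_ℂ) (x : E) :
    RCLike.re ⟪x, A x⟫_ℂ ≤ ‖x‖ ^ 2 * ∑' i, RCLike.re ⟪e i, A (e i)⟫_ℂ := by
  set S := CFC.sqrt A with hS
  have hsa : IsSelfAdjoint S := IsSelfAdjoint.of_nonneg (CFC.sqrt_nonneg _)
  rw [re_quad_eq_norm_sq hA x]
  have hpar := parseval_re e (S x)
  rw [← hpar.tsum_eq]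
  have hterm : ∀ i, ‖⟪e i, S x⟫_ℂ‖ ^ 2 ≤ RCLike.re ⟪e i, A (e i)⟫_ℂ * ‖x‖ ^ 2 := by
    intro i
    have : ⟪e i, S x⟫_ℂ = ⟪S (e i), x⟫_ℂ := (inner_symm_of_sa hsa (e i) x).symm
    rw [this, diag_eq_norm_sq hA (e i), ← hS]
    calc ‖⟪S (e i), x⟫_ℂ‖ ^ 2 ≤ (‖S (e i)‖ * ‖x‖) ^ 2 := by
          have := norm_inner_le_norm (𝕜 := ℂ) (S (e i)) x
          exact pow_le_pow_left₀ (norm_nonneg _) this 2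
      _ = ‖S (e i)‖ ^ 2 * ‖x‖ ^ 2 := by ring
  calc ∑' i, ‖⟪e i, S x⟫_ℂ‖ ^ 2 ≤ ∑' i, RCLike.re ⟪e i, A (e i)⟫_ℂ * ‖x‖ ^ 2 := by
        exact Summable.tsum_le_tsum hterm hpar.summable (hsum.mul_right _)
    _ = ‖x‖ ^ 2 * ∑' i, RCLike.re ⟪e i, A (e i)⟫_ℂ := by rw [tsum_mul_right, mul_comm]

/-- finite Bessel-type bound for conjugated traces:
`∑_{i∈F} ‖C (R (e i))‖² ≤ ‖R‖² ∑_j ‖C e j‖²` for selfadjoint `R, C`. -/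
lemma finset_conj_bound {ι : Type*} (e : HilbertBasis ι ℂ E) {R C : E →L[ℂ] E}
    (hR : IsSelfAdjoint R) (hC : IsSelfAdjoint C)
    (hsum : Summable fun j => ‖C (e j)‖ ^ 2) (F : Finset ι) :
    ∑ i ∈ F, ‖C (R (e i))‖ ^ 2 ≤ ‖R‖ ^ 2 * ∑' j, ‖C (e j)‖ ^ 2 := by
  have key : ∀ i, ‖C (R (e i))‖ ^ 2 = ∑' j, ‖⟪C (e j), R (e i)⟫_ℂ‖ ^ 2 := by
    intro i
    rw [← (parseval_re e (C (R (e i)))).tsum_eq]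
    congr 1; ext j
    rw [inner_symm_of_sa hC]
  calc ∑ i ∈ F, ‖C (R (e i))‖ ^ 2
      = ∑ i ∈ F, ∑' j, ‖⟪R (C (e j)), e i⟫_ℂ‖ ^ 2 := by
        refine Finset.sum_congr rfl fun i _ => ?_
        rw [key i]; congr 1; ext j; rw [← inner_symm_of_sa hR]
    _ = ∑' j, ∑ i ∈ F, ‖⟪R (C (e j)), e i⟫_ℂ‖ ^ 2 := by
        rw [Summable.tsum_finsetSum]
        intro i _
        refine ((parseval_re e (C (R (e i)))).summable).congr fun j => ?_
        rw [inner_symm_of_sa hR (C (e j)) (e i), inner_symm_of_sa hC (e j) (R (e i))]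
    _ ≤ ∑' j, ‖R‖ ^ 2 * ‖C (e j)‖ ^ 2 := by
        refine Summable.tsum_le_tsum (fun j => ?_) ?_ (hsum.mul_left _)
        · calc ∑ i ∈ F, ‖⟪R (C (e j)), e i⟫_ℂ‖ ^ 2
              = ∑ i ∈ F, ‖⟪e i, R (C (e j))⟫_ℂ‖ ^ 2 := by
                refine Finset.sum_congr rfl fun i _ => ?_; rw [norm_inner_symm]
            _ ≤ ‖R (C (e j))‖ ^ 2 := e.orthonormal.sum_inner_products_le _
            _ ≤ (‖R‖ * ‖C (e j)‖) ^ 2 := by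
                exact pow_le_pow_left₀ (norm_nonneg _) (R.le_opNorm _) 2
            _ = ‖R‖ ^ 2 * ‖C (e j)‖ ^ 2 := by ring
        · -- summability of j ↦ ∑ i ∈ F, ...
          refine Summable.of_nonneg_of_le (fun j => ?_) (fun j => ?_) (hsum.mul_left (‖R‖^2))
          · positivity
          · calc ∑ i ∈ F, ‖⟪R (C (e j)), e i⟫_ℂ‖ ^ 2
                = ∑ i ∈ F, ‖⟪e i, R (C (e j))⟫_ℂ‖ ^ 2 := by
                  refine Finset.sum_congr rfl fun i _ => ?_; rw [norm_inner_symm]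
              _ ≤ ‖R (C (e j))‖ ^ 2 := e.orthonormal.sum_inner_products_le _
              _ ≤ (‖R‖ * ‖C (e j)‖) ^ 2 := pow_le_pow_left₀ (norm_nonneg _) (R.le_opNorm _) 2
              _ = ‖R‖ ^ 2 * ‖C (e j)‖ ^ 2 := by ring
    _ = ‖R‖ ^ 2 * ∑' j, ‖C (e j)‖ ^ 2 := by rw [← tsum_mul_left]

/-- diag monotonicity. -/
lemma diag_mono {X Y : E →L[ℂ] E} (hXY : X ≤ Y) (x : E) :
    RCLike.re ⟪x, X x⟫_ℂ ≤ RCLike.re ⟪x, Y x⟫_ℂ := by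
  have h := (ContinuousLinearMap.le_def X Y).mp hXY
  have := h.re_inner_nonneg_right x
  have hsub : ⟪x, (Y - X) x⟫_ℂ = ⟪x, Y x⟫_ℂ - ⟪x, X x⟫_ℂ := by
    rw [ContinuousLinearMap.sub_apply, inner_sub_right]
  rw [hsub, map_sub] at this
  linarith

/-- L2: the positive part of an operator dominated by a positive diag-summable operator
has summable diagonal, with trace bound. -/
lemma posPart_diag_summable {ι : Type*} (e : HilbertBasis ι ℂ E) {T S : E →L[ℂ] E}
    (hT : IsSelfAdjoint T) (hS : 0 ≤ S) (hTS : T ≤ S)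
    (hsum : Summable fun i => RCLike.re ⟪e i, S (e i)⟫_ℂ) :
    (Summable fun i => RCLike.re ⟪e i, T⁺ (e i)⟫_ℂ) ∧
      ∑' i, RCLike.re ⟪e i, T⁺ (e i)⟫_ℂ ≤ ∑' i, RCLike.re ⟪e i, S (e i)⟫_ℂ := by
  set C := CFC.sqrt S with hCdef
  have hC_sa : IsSelfAdjoint C := IsSelfAdjoint.of_nonneg (CFC.sqrt_nonneg _)
  have hsum' : Summable fun j => ‖C (e j)‖ ^ 2 :=
    hsum.congr fun i => diag_eq_norm_sq hS (e i)
  have htrS : ∑' j, ‖C (e j)‖ ^ 2 = ∑' i, RCLike.re ⟪e i, S (e i)⟫_ℂ :=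
    tsum_congr fun i => (diag_eq_norm_sq hS (e i)).symm
  -- the key finite bound
  have key : ∀ F : Finset ι, ∑ i ∈ F, RCLike.re ⟪e i, T⁺ (e i)⟫_ℂ
      ≤ ∑' i, RCLike.re ⟪e i, S (e i)⟫_ℂ := by
    intro F
    refine le_of_forall_pos_le_add fun δ hδ => ?_
    set ε : ℝ := δ / (F.card + 1) with hεdef
    have hε : 0 < ε := by positivity
    set g : ℝ → ℝ := fun x => Real.sqrt ((x ⊔ 0) / (|x| + ε)) with hgdef
    have hg_cont : Continuous g := by
      apply Real.continuous_sqrt.comp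
      apply Continuous.div (continuous_id.max continuous_const)
        ((continuous_abs.add continuous_const))
      intro x
      exact (add_pos_of_nonneg_of_pos (abs_nonneg x) hε).ne'
    set R := cfc g T with hRdef
    have hR_sa : IsSelfAdjoint R := cfc_predicate g T
    have hg_le_one : ∀ x : ℝ, g x ≤ 1 := by
      intro x
      rw [hgdef]
      rw [Real.sqrt_le_one, div_le_one (by positivity)]
      rcases le_total x 0 with h | h
      · simp [max_eq_right h]
        positivity
      · rw [max_eq_left h, abs_of_nonneg h]
        linarith
    have hR_norm : ‖R‖ ≤ 1 := by
      apply norm_cfc_le zero_le_one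
      intro x _
      rw [Real.norm_eq_abs, abs_of_nonneg (Real.sqrt_nonneg _)]
      exact hg_le_one x
    -- operator inequality : T⁺ ≤ R * S * R + ε • 1
    have hkey : T⁺ ≤ R * S * R + ε • (1 : E →L[ℂ] E) := by
      have h1 : T⁺ = cfc (fun x : ℝ => x ⊔ 0) T := by
        rw [CFC.posPart_def, cfcₙ_eq_cfc]
        exact cfc_congr fun x _ => posPart_def x
      have h2 : cfc (fun x : ℝ => x ⊔ 0) T ≤ cfc (fun x : ℝ => g x * x * g x + ε) T := by
        refine cfc_mono (fun x _ => ?_)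
          ((continuous_id.sup continuous_const).continuousOn)
          ((((hg_cont.mul continuous_id).mul hg_cont).add continuous_const).continuousOn)
        have hd : 0 < |x| + ε := by positivity
        have hgsq : g x * g x = (x ⊔ 0) / (|x| + ε) := by
          rw [hgdef]
          exact Real.mul_self_sqrt (by positivity)
        have : g x * x * g x = x * ((x ⊔ 0) / (|x| + ε)) := by
          rw [← hgsq]; ring
        rw [this]
        rcases le_total x 0 with h | h
        · rw [max_eq_right h]
          simp only [zero_div, mul_zero, zero_add]
          exact hε.le
        · rw [max_eq_left h, abs_of_nonneg h]
          rw [← sub_nonneg]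
          have hxe : (0:ℝ) < x + ε := by positivity
          have heq : x * (x / (x + ε)) + ε - x = ε * ε / (x + ε) := by
            field_simp
            ring
          rw [heq]
          positivity
      have h3 : cfc (fun x : ℝ => g x * x * g x + ε) T = R * T * R + ε • (1 : E →L[ℂ] E) := by
        have hc1 : ContinuousOn (fun x : ℝ => g x * x) (spectrum ℝ T) :=
          (hg_cont.mul continuous_id).continuousOn
        have hc2 : ContinuousOn (fun x : ℝ => g x * x * g x) (spectrum ℝ T) :=
          ((hg_cont.mul continuous_id).mul hg_cont).continuousOn
        rw [cfc_add T (fun x : ℝ => g x * x * g x) (fun _ : ℝ => ε) hc2 continuousOn_const]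
        congr 1
        · rw [cfc_mul (fun x : ℝ => g x * x) g T hc1 hg_cont.continuousOn,
            cfc_mul g (fun x : ℝ => x) T hg_cont.continuousOn (continuousOn_id),
            cfc_id' ℝ T hT]
        · rw [cfc_const ε T hT, Algebra.algebraMap_eq_smul_one]
      have h4 : R * T * R ≤ R * S * R := by
        have := star_left_conjugate_le_conjugate hTS R
        rwa [hR_sa.star_eq] at this
      calc T⁺ = cfc (fun x : ℝ => x ⊔ 0) T := h1
        _ ≤ cfc (fun x : ℝ => g x * x * g x + ε) T := h2
        _ = R * T * R + ε • (1 : E →L[ℂ] E) := h3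
        _ ≤ R * S * R + ε • (1 : E →L[ℂ] E) := by
            exact add_le_add_left h4 _
    -- diagonal consequences
    have hdiag : ∀ i, RCLike.re ⟪e i, T⁺ (e i)⟫_ℂ ≤ ‖C (R (e i))‖ ^ 2 + ε := by
      intro i
      refine (diag_mono hkey (e i)).trans ?_
      have hsplit : ⟪e i, (R * S * R + ε • (1 : E →L[ℂ] E)) (e i)⟫_ℂ
          = ⟪R (e i), S (R (e i))⟫_ℂ + (ε : ℂ) * ⟪e i, e i⟫_ℂ := by
        rw [ContinuousLinearMap.add_apply, inner_add_right]
        congr 1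
        · rw [ContinuousLinearMap.mul_apply, ContinuousLinearMap.mul_apply]
          rw [← inner_symm_of_sa hR_sa]
        · rw [ContinuousLinearMap.smul_apply, ContinuousLinearMap.one_apply,
            RCLike.real_smul_eq_coe_smul (K := ℂ), inner_smul_right]
          norm_cast
      rw [hsplit, map_add]
      have h1 : RCLike.re ⟪R (e i), S (R (e i))⟫_ℂ = ‖C (R (e i))‖ ^ 2 :=
        diag_eq_norm_sq hS (R (e i))
      have h2 : RCLike.re ((ε : ℂ) * ⟪e i, e i⟫_ℂ) = ε := by
        rw [inner_self_eq_norm_sq_to_K (𝕜 := ℂ)]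
        have : ‖e i‖ = 1 := e.orthonormal.1 i
        rw [this]
        norm_num
      rw [h1, h2]
    calc ∑ i ∈ F, RCLike.re ⟪e i, T⁺ (e i)⟫_ℂ
        ≤ ∑ i ∈ F, (‖C (R (e i))‖ ^ 2 + ε) := Finset.sum_le_sum fun i _ => hdiag i
      _ = (∑ i ∈ F, ‖C (R (e i))‖ ^ 2) + ε * F.card := by
          rw [Finset.sum_add_distrib, Finset.sum_const, nsmul_eq_mul, mul_comm]
      _ ≤ ‖R‖ ^ 2 * ∑' j, ‖C (e j)‖ ^ 2 + ε * F.card := by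
          exact add_le_add_left (finset_conj_bound e hR_sa hC_sa hsum' F) _
      _ ≤ ∑' i, RCLike.re ⟪e i, S (e i)⟫_ℂ + δ := by
          apply add_le_add
          · rw [htrS]
            have htrS_nn : 0 ≤ ∑' i, RCLike.re ⟪e i, S (e i)⟫_ℂ :=
              tsum_nonneg fun i => diag_nonneg hS (e i)
            calc ‖R‖ ^ 2 * ∑' i, RCLike.re ⟪e i, S (e i)⟫_ℂ
                ≤ 1 * ∑' i, RCLike.re ⟪e i, S (e i)⟫_ℂ := by
                  apply mul_le_mul_of_nonneg_right _ htrS_nn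
                  calc ‖R‖ ^ 2 ≤ 1 ^ 2 := pow_le_pow_left₀ (norm_nonneg _) hR_norm 2
                    _ = 1 := one_pow 2
              _ = _ := one_mul _
          · rw [hεdef]
            rw [div_mul_eq_mul_div, div_le_iff₀ (by positivity)]
            push_cast
            nlinarith [Nat.cast_nonneg (α := ℝ) F.card, hδ.le]
  have hnn : ∀ i, 0 ≤ RCLike.re ⟪e i, T⁺ (e i)⟫_ℂ :=
    fun i => diag_nonneg (CFC.posPart_nonneg T) (e i)
  have hsummable : Summable fun i => RCLike.re ⟪e i, T⁺ (e i)⟫_ℂ :=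
    summable_of_sum_le hnn key
  exact ⟨hsummable, Summable.tsum_le_of_sum_le hsummable key⟩

lemma absOp_of_nonneg {A : E →L[ℂ] E} (hA : 0 ≤ A) : absOp A = A := by
  have hsa : IsSelfAdjoint A := IsSelfAdjoint.of_nonneg hA
  rw [absOp, ← ContinuousLinearMap.star_eq_adjoint, hsa.star_eq, CFC.sqrt_mul_self A hA]

lemma absOp_of_selfAdjoint {T : E →L[ℂ] E} (hT : IsSelfAdjoint T) : absOp T = T⁺ + T⁻ := by
  rw [absOp, ← ContinuousLinearMap.star_eq_adjoint, hT.star_eq]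
  have hmul : T * T = (T⁺ + T⁻) * (T⁺ + T⁻) := by
    conv_lhs => rw [← CFC.posPart_sub_negPart T hT]
    have h1 : T⁺ * T⁻ = 0 := CFC.posPart_mul_negPart T
    have h2 : T⁻ * T⁺ = 0 := CFC.negPart_mul_posPart T
    rw [sub_mul, mul_sub, mul_sub, add_mul, mul_add, mul_add, h1, h2]
    abel
  rw [hmul, CFC.sqrt_mul_self _ (add_nonneg (CFC.posPart_nonneg T) (CFC.negPart_nonneg T))]

/-- Main quantitative lemma: for a difference of positive diag-summable operators,
the quadratic form is controlled by the trace norm. -/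
lemma re_inner_le_trNorm {ι : Type*} (e : HilbertBasis ι ℂ E) {A B : E →L[ℂ] E}
    (hA : 0 ≤ A) (hB : 0 ≤ B)
    (hAsum : Summable fun i => RCLike.re ⟪e i, A (e i)⟫_ℂ)
    (hBsum : Summable fun i => RCLike.re ⟪e i, B (e i)⟫_ℂ) (x : E) :
    |RCLike.re ⟪x, (A - B) x⟫_ℂ| ≤ ‖x‖ ^ 2 * trNormAlong e (A - B) := by
  set T := A - B with hTdef
  have hA_sa : IsSelfAdjoint A := IsSelfAdjoint.of_nonneg hA
  have hB_sa : IsSelfAdjoint B := IsSelfAdjoint.of_nonneg hB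
  have hT_sa : IsSelfAdjoint T := hA_sa.sub hB_sa
  have hTleA : T ≤ A := by
    rw [ContinuousLinearMap.le_def]
    have : A - T = B := by rw [hTdef]; abel
    rw [this]
    exact (nonneg_iff_isPositive B).mp hB
  have hnT_sa : IsSelfAdjoint (-T) := hT_sa.neg
  have hnTleB : -T ≤ B := by
    rw [ContinuousLinearMap.le_def]
    have : B - -T = A := by rw [hTdef]; abel
    rw [this]
    exact (nonneg_iff_isPositive A).mp hA
  obtain ⟨hsumP, -⟩ := posPart_diag_summable e hT_sa hA hTleA hAsum
  obtain ⟨hsumN', -⟩ := posPart_diag_summable e hnT_sa hB hnTleB hBsum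
  have hsumN : Summable fun i => RCLike.re ⟪e i, T⁻ (e i)⟫_ℂ := by
    refine hsumN'.congr fun i => ?_
    rw [CFC.posPart_neg T]
  have habs : absOp T = T⁺ + T⁻ := absOp_of_selfAdjoint hT_sa
  have habs_nonneg : (0 : E →L[ℂ] E) ≤ T⁺ + T⁻ :=
    add_nonneg (CFC.posPart_nonneg T) (CFC.negPart_nonneg T)
  have habs_sum : Summable fun i => RCLike.re ⟪e i, (T⁺ + T⁻) (e i)⟫_ℂ := by
    refine ((hsumP.add hsumN).congr fun i => ?_)
    rw [ContinuousLinearMap.add_apply, inner_add_right, map_add]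
  have htr : trNormAlong e T = ∑' i, RCLike.re ⟪e i, (T⁺ + T⁻) (e i)⟫_ℂ := by
    rw [trNormAlong, trAlong, habs]
  have hquad := quad_le_tr e habs_nonneg habs_sum x
  rw [abs_le]
  constructor
  · have h1 : -T ≤ T⁺ + T⁻ := by
      calc -T ≤ (-T)⁺ := CFC.le_posPart hnT_sa
        _ = T⁻ := CFC.posPart_neg T
        _ ≤ T⁺ + T⁻ := le_add_of_nonneg_left (CFC.posPart_nonneg T)
    have h2 := (diag_mono h1 x).trans hquad
    have h3 : RCLike.re ⟪x, (-T) x⟫_ℂ = -RCLike.re ⟪x, T x⟫_ℂ := by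
      rw [ContinuousLinearMap.neg_apply, inner_neg_right, map_neg]
    rw [h3] at h2
    rw [htr]
    linarith
  · have h1 : T ≤ T⁺ + T⁻ := by
      calc T ≤ T⁺ := CFC.le_posPart hT_sa
        _ ≤ T⁺ + T⁻ := le_add_of_nonneg_right (CFC.negPart_nonneg T)
    have h2 := (diag_mono h1 x).trans hquad
    rw [htr]
    linarith

/-- trace norm is nonnegative. -/
lemma trNormAlong_nonneg {ι : Type*} (e : HilbertBasis ι ℂ E) (T : E →L[ℂ] E) :
    0 ≤ trNormAlong e T := by
  rw [trNormAlong, trAlong]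
  refine tsum_nonneg fun i => diag_nonneg ?_ (e i)
  rw [absOp]
  exact CFC.sqrt_nonneg _

lemma diag_le_smul_one {X : E →L[ℂ] E} {c : ℝ} (h : X ≤ c • (1 : E →L[ℂ] E)) (x : E) :
    RCLike.re ⟪x, X x⟫_ℂ ≤ c * ‖x‖ ^ 2 := by
  refine (diag_mono h x).trans ?_
  rw [ContinuousLinearMap.smul_apply, ContinuousLinearMap.one_apply,
    RCLike.real_smul_eq_coe_smul (K := ℂ), inner_smul_right, RCLike.re_ofReal_mul,
    inner_self_eq_norm_sq]

/-- `τ ≤ (trace norm) • 1` for a difference of positive diag-summable operators. -/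
lemma le_trNorm_smul_one {ι : Type*} (e : HilbertBasis ι ℂ E) {A B : E →L[ℂ] E}
    (hA : 0 ≤ A) (hB : 0 ≤ B)
    (hAsum : Summable fun i => RCLike.re ⟪e i, A (e i)⟫_ℂ)
    (hBsum : Summable fun i => RCLike.re ⟪e i, B (e i)⟫_ℂ) :
    A - B ≤ trNormAlong e (A - B) • (1 : E →L[ℂ] E) ∧
      -(A - B) ≤ trNormAlong e (A - B) • (1 : E →L[ℂ] E) := by
  set T := A - B with hTdef
  set c := trNormAlong e T with hcdef
  have hA_sa : IsSelfAdjoint A := IsSelfAdjoint.of_nonneg hA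
  have hB_sa : IsSelfAdjoint B := IsSelfAdjoint.of_nonneg hB
  have hT_sa : IsSelfAdjoint T := hA_sa.sub hB_sa
  have hone_sa : IsSelfAdjoint (c • (1 : E →L[ℂ] E)) := by
    rw [IsSelfAdjoint, star_smul, star_one, star_trivial]
  have hbound := re_inner_le_trNorm e hA hB hAsum hBsum
  constructor
  · rw [ContinuousLinearMap.le_def]
    constructor
    · exact isSelfAdjoint_iff_isSymmetric.mp (hone_sa.sub hT_sa)
    · intro x
      rw [ContinuousLinearMap.reApplyInnerSelf_apply, ContinuousLinearMap.sub_apply]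
      rw [inner_sub_left, map_sub]
      have h1 : RCLike.re ⟪(c • (1 : E →L[ℂ] E)) x, x⟫_ℂ = c * ‖x‖ ^ 2 := by
        rw [ContinuousLinearMap.smul_apply, ContinuousLinearMap.one_apply,
          RCLike.real_smul_eq_coe_smul (K := ℂ), inner_smul_left, RCLike.conj_ofReal,
          RCLike.re_ofReal_mul, inner_self_eq_norm_sq]
      have h2 : RCLike.re ⟪T x, x⟫_ℂ = RCLike.re ⟪x, T x⟫_ℂ := by
        rw [← inner_conj_symm x (T x), RCLike.conj_re]
      have h3 := (abs_le.mp (hbound x)).2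
      rw [h1, h2]
      have := mul_comm (‖x‖ ^ 2) c
      nlinarith [h3]
  · rw [ContinuousLinearMap.le_def]
    constructor
    · exact isSelfAdjoint_iff_isSymmetric.mp (hone_sa.sub hT_sa.neg)
    · intro x
      rw [ContinuousLinearMap.reApplyInnerSelf_apply, ContinuousLinearMap.sub_apply]
      rw [inner_sub_left, map_sub]
      have h1 : RCLike.re ⟪(c • (1 : E →L[ℂ] E)) x, x⟫_ℂ = c * ‖x‖ ^ 2 := by
        rw [ContinuousLinearMap.smul_apply, ContinuousLinearMap.one_apply,
          RCLike.real_smul_eq_coe_smul (K := ℂ), inner_smul_left, RCLike.conj_ofReal,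
          RCLike.re_ofReal_mul, inner_self_eq_norm_sq]
      have h2 : RCLike.re ⟪(-T) x, x⟫_ℂ = -RCLike.re ⟪x, T x⟫_ℂ := by
        rw [ContinuousLinearMap.neg_apply, inner_neg_left, map_neg,
          ← inner_conj_symm x (T x), RCLike.conj_re]
      have h3 := (abs_le.mp (hbound x)).1
      rw [h1, h2]
      nlinarith [h3]

section Tensor

variable {HA HB H : Type*} [NormedAddCommGroup HA] [InnerProductSpace ℂ HA]
  [NormedAddCommGroup HB] [InnerProductSpace ℂ HB] [CompleteSpace HB]
  [NormedAddCommGroup H] [InnerProductSpace ℂ H] [CompleteSpace H]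
  (TP : HilbertTensor HA HB H)

lemma HilbertTensor.map_ext' {S T : H →L[ℂ] H}
    (h : ∀ a b, S (TP.tmul a b) = T (TP.tmul a b)) : S = T := by
  have hEq : Set.EqOn S T
      ((Submodule.span ℂ {z : H | ∃ a b, z = TP.tmul a b} : Submodule ℂ H) : Set H) := by
    intro x hx
    induction hx using Submodule.span_induction with
    | mem z hz => obtain ⟨a, b, rfl⟩ := hz; exact h a b
    | zero => simp
    | add u v hu hv hu' hv' => simp [map_add, hu', hv']
    | smul c u hu hu' => simp [map_smul, hu']
  have := Continuous.ext_on TP.dense_span S.continuous T.continuous hEq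
  exact ContinuousLinearMap.coeFn_injective this

lemma HilbertTensor.map_one_pos {σ' : HB →L[ℂ] HB} (hσ' : 0 ≤ σ') : 0 ≤ TP.map 1 σ' := by
  set M := TP.map 1 σ' with hMdef
  set C := CFC.sqrt σ' with hCdef
  have hC_sa : IsSelfAdjoint C := IsSelfAdjoint.of_nonneg (CFC.sqrt_nonneg _)
  have hCC : C * C = σ' := CFC.sqrt_mul_sqrt_self σ' hσ'
  have hinner : ∀ b b' : HB, ⟪b, σ' b'⟫_ℂ = ⟪C b, C b'⟫_ℂ := by
    intro b b'
    rw [← hCC]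
    rw [ContinuousLinearMap.mul_apply, ← inner_symm_of_sa hC_sa]
  have hspan : ∀ x ∈ ((Submodule.span ℂ {z : H | ∃ a b, z = TP.tmul a b} : Submodule ℂ H) : Set H),
      RCLike.im ⟪x, M x⟫_ℂ = 0 ∧ 0 ≤ RCLike.re ⟪x, M x⟫_ℂ := by
    intro x hx
    rw [SetLike.mem_coe, Submodule.mem_span_set'] at hx
    obtain ⟨n, c, v, rfl⟩ := hx
    choose a b hab using fun i => (v i).2
    set y := ∑ i, c i • TP.tmul (a i) (C (b i)) with hydef
    have hxy : ⟪∑ i, c i • (v i : H), M (∑ i, c i • (v i : H))⟫_ℂ = ⟪y, y⟫_ℂ := by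
      have hM : M (∑ i, c i • (v i : H)) = ∑ j, c j • TP.tmul (a j) (σ' (b j)) := by
        rw [map_sum]
        refine Finset.sum_congr rfl fun j _ => ?_
        rw [map_smul, hab j, hMdef, TP.map_tmul, ContinuousLinearMap.one_apply]
      rw [hM, hydef]
      rw [sum_inner, sum_inner]
      refine Finset.sum_congr rfl fun i _ => ?_
      rw [inner_sum, inner_sum]
      refine Finset.sum_congr rfl fun j _ => ?_
      rw [hab i]
      rw [inner_smul_left, inner_smul_left, inner_smul_right, inner_smul_right]
      rw [TP.inner_tmul, TP.inner_tmul, hinner]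
    rw [hxy]
    exact ⟨inner_self_im y, inner_self_nonneg⟩
  have hall : ∀ x : H, RCLike.im ⟪x, M x⟫_ℂ = 0 ∧ 0 ≤ RCLike.re ⟪x, M x⟫_ℂ := by
    have hc : Continuous fun x : H => ⟪x, M x⟫_ℂ := continuous_id.inner M.continuous
    have hclosed : IsClosed {x : H |
        RCLike.im ⟪x, M x⟫_ℂ = 0 ∧ 0 ≤ RCLike.re ⟪x, M x⟫_ℂ} := by
      refine IsClosed.inter ?_ ?_
      · exact isClosed_eq (RCLike.continuous_im.comp hc) continuous_const
      · exact isClosed_le continuous_const (RCLike.continuous_re.comp hc)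
    intro x
    have hxcl : x ∈ closure ((Submodule.span ℂ
        {z : H | ∃ a b, z = TP.tmul a b} : Submodule ℂ H) : Set H) := by
      rw [TP.dense_span.closure_eq]; trivial
    exact closure_minimal hspan hclosed hxcl
  rw [nonneg_iff_isPositive, ContinuousLinearMap.isPositive_iff_complex]
  intro x
  obtain ⟨him, hre⟩ := hall x
  have hconj : ⟪M x, x⟫_ℂ = (starRingEnd ℂ) ⟪x, M x⟫_ℂ := (inner_conj_symm _ _).symm
  have hz : (starRingEnd ℂ) ⟪x, M x⟫_ℂ = ⟪x, M x⟫_ℂ := by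
    rw [RCLike.conj_eq_iff_im]; exact him
  constructor
  · refine RCLike.conj_eq_iff_re.mp ?_
    rw [hconj, RCLike.conj_conj, hz]
  · rw [hconj, RCLike.conj_re]
    exact hre

lemma HilbertTensor.map_one_sub (σ1 σ2 : HB →L[ℂ] HB) :
    TP.map 1 σ1 - TP.map 1 σ2 = TP.map 1 (σ1 - σ2) := by
  refine TP.map_ext' fun a b => ?_
  rw [ContinuousLinearMap.sub_apply, TP.map_tmul, TP.map_tmul, TP.map_tmul,
    ContinuousLinearMap.one_apply, ContinuousLinearMap.sub_apply, map_sub]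

lemma HilbertTensor.map_one_neg (τ : HB →L[ℂ] HB) :
    TP.map 1 (-τ) = -(TP.map 1 τ) := by
  refine TP.map_ext' fun a b => ?_
  rw [ContinuousLinearMap.neg_apply, TP.map_tmul, TP.map_tmul,
    ContinuousLinearMap.one_apply, ContinuousLinearMap.neg_apply, map_neg]

lemma HilbertTensor.map_one_smul_one (c : ℝ) :
    TP.map 1 (c • (1 : HB →L[ℂ] HB)) = c • (1 : H →L[ℂ] H) := by
  refine TP.map_ext' fun a b => ?_
  rw [TP.map_tmul, ContinuousLinearMap.one_apply, ContinuousLinearMap.smul_apply,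
    ContinuousLinearMap.one_apply, ContinuousLinearMap.smul_apply,
    ContinuousLinearMap.one_apply, RCLike.real_smul_eq_coe_smul (K := ℂ),
    RCLike.real_smul_eq_coe_smul (K := ℂ) c, map_smul]

/-- The σ-side bound: quadratic form of `1 ⊗ (A - B)` is controlled by the trace norm. -/
lemma tensor_quad_bound {κ : Type*} (f : HilbertBasis κ ℂ HB) {A B : HB →L[ℂ] HB}
    (hA : 0 ≤ A) (hB : 0 ≤ B)
    (hAsum : Summable fun i => RCLike.re ⟪f i, A (f i)⟫_ℂ)
    (hBsum : Summable fun i => RCLike.re ⟪f i, B (f i)⟫_ℂ) (x : H) :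
    |RCLike.re ⟪x, (TP.map 1 A - TP.map 1 B) x⟫_ℂ| ≤ ‖x‖ ^ 2 * trNormAlong f (A - B) := by
  set c := trNormAlong f (A - B) with hcdef
  obtain ⟨hle1, hle2⟩ := le_trNorm_smul_one f hA hB hAsum hBsum
  have hM1 : TP.map 1 A - TP.map 1 B ≤ c • (1 : H →L[ℂ] H) := by
    rw [TP.map_one_sub]
    have h := TP.map_one_sub (c • (1 : HB →L[ℂ] HB)) (A - B)
    have hpos : 0 ≤ TP.map 1 (c • (1 : HB →L[ℂ] HB)) - TP.map 1 (A - B) := by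
      rw [h]
      exact TP.map_one_pos (by rwa [← sub_nonneg] at hle1)
    have := sub_nonneg.mp hpos
    rwa [TP.map_one_smul_one] at this
  have hM2 : -(TP.map 1 A - TP.map 1 B) ≤ c • (1 : H →L[ℂ] H) := by
    rw [TP.map_one_sub, ← TP.map_one_neg]
    have h := TP.map_one_sub (c • (1 : HB →L[ℂ] HB)) (-(A - B))
    have hpos : 0 ≤ TP.map 1 (c • (1 : HB →L[ℂ] HB)) - TP.map 1 (-(A - B)) := by
      rw [h]
      exact TP.map_one_pos (by rwa [← sub_nonneg] at hle2)
    have := sub_nonneg.mp hpos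
    rwa [TP.map_one_smul_one] at this
  have h1 := diag_le_smul_one hM1 x
  have h2 := diag_le_smul_one hM2 x
  have h3 : RCLike.re ⟪x, (-(TP.map 1 A - TP.map 1 B)) x⟫_ℂ
      = -RCLike.re ⟪x, (TP.map 1 A - TP.map 1 B) x⟫_ℂ := by
    rw [ContinuousLinearMap.neg_apply, inner_neg_right, map_neg]
  rw [h3] at h2
  rw [abs_le]
  constructor <;> [linarith [mul_comm c (‖x‖ ^ 2)]; linarith [mul_comm c (‖x‖ ^ 2)]]

end Tensor

lemma smul_nonneg_op {c : ℝ} (hc : 0 ≤ c) {M : E →L[ℂ] E} (hM : 0 ≤ M) : 0 ≤ c • M := by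
  rw [nonneg_iff_isPositive] at hM ⊢
  constructor
  · exact isSelfAdjoint_iff_isSymmetric.mp (by rw [IsSelfAdjoint, star_smul, star_trivial, hM.isSelfAdjoint.star_eq])
  · intro x
    rw [ContinuousLinearMap.reApplyInnerSelf_apply, ContinuousLinearMap.smul_apply,
      RCLike.real_smul_eq_coe_smul (K := ℂ), inner_smul_left, RCLike.conj_ofReal,
      RCLike.re_ofReal_mul]
    exact mul_nonneg hc (hM.re_inner_nonneg_left x)

lemma re_inner_flip (T : E →L[ℂ] E) (x : E) :
    RCLike.re ⟪T x, x⟫_ℂ = RCLike.re ⟪x, T x⟫_ℂ := by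
  rw [← inner_conj_symm x (T x), RCLike.conj_re]

lemma re_inner_smul_op (c : ℝ) (T : E →L[ℂ] E) (x : E) :
    RCLike.re ⟪x, (c • T) x⟫_ℂ = c * RCLike.re ⟪x, T x⟫_ℂ := by
  rw [ContinuousLinearMap.smul_apply, RCLike.real_smul_eq_coe_smul (K := ℂ),
    inner_smul_right, RCLike.re_ofReal_mul]

end AuxLemmas

noncomputable section

/-- `Λ(ρ_AB|σ_B)` is lower semicontinuous in the pair `(ρ_AB, σ_B)` w.r.t.
trace-norm convergence: lower level sets are (sequentially) closed. -/
theorem LamCond_lower_semicontinuous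
    {HA HB H : Type*} [NormedAddCommGroup HA] [InnerProductSpace ℂ HA]
    [TopologicalSpace.SeparableSpace HA]
    [NormedAddCommGroup HB] [InnerProductSpace ℂ HB] [CompleteSpace HB]
    [TopologicalSpace.SeparableSpace HB]
    [NormedAddCommGroup H] [InnerProductSpace ℂ H] [CompleteSpace H]
    [TopologicalSpace.SeparableSpace H]
    (TP : HilbertTensor HA HB H)
    {ι κ : Type*} (e : HilbertBasis ι ℂ H) (f : HilbertBasis κ ℂ HB)
    (t : ℝ) (ρs : ℕ → H →L[ℂ] H) (σs : ℕ → HB →L[ℂ] HB)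
    (ρ : H →L[ℂ] H) (σ : HB →L[ℂ] HB)
    (hρspos : ∀ k, (ρs k).IsPositive) (hρstc : ∀ k, IsTraceClass e (ρs k))
    (hσspos : ∀ k, (σs k).IsPositive) (hσstc : ∀ k, IsTraceClass f (σs k))
    (hρpos : ρ.IsPositive) (hρtc : IsTraceClass e ρ)
    (hσpos : σ.IsPositive) (hσtc : IsTraceClass f σ)
    (hconvρ : Tendsto (fun k => trNormAlong e (ρs k - ρ)) atTop (nhds 0))
    (hconvσ : Tendsto (fun k => trNormAlong f (σs k - σ)) atTop (nhds 0))
    (hlevel : ∀ k, LamCond TP (ρs k) (σs k) ≤ (t : EReal)) :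
    LamCond TP ρ σ ≤ (t : EReal) := by
  by_contra hcon
  rw [not_le] at hcon
  obtain ⟨r, hr1, hr2⟩ := EReal.exists_between_coe_real hcon
  have hσ0 : 0 ≤ σ := (nonneg_iff_isPositive σ).mpr hσpos
  have hρ0 : 0 ≤ ρ := (nonneg_iff_isPositive ρ).mpr hρpos
  have hσs0 : ∀ k, 0 ≤ σs k := fun k => (nonneg_iff_isPositive _).mpr (hσspos k)
  have hρs0 : ∀ k, 0 ≤ ρs k := fun k => (nonneg_iff_isPositive _).mpr (hρspos k)
  have hρsum : Summable fun i => RCLike.re ⟪e i, ρ (e i)⟫_ℂ :=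
    hρtc.congr fun i => by rw [absOp_of_nonneg hρ0]
  have hσsum : Summable fun i => RCLike.re ⟪f i, σ (f i)⟫_ℂ :=
    hσtc.congr fun i => by rw [absOp_of_nonneg hσ0]
  have hρssum : ∀ k, Summable fun i => RCLike.re ⟪e i, ρs k (e i)⟫_ℂ := fun k =>
    (hρstc k).congr fun i => by rw [absOp_of_nonneg (hρs0 k)]
  have hσssum : ∀ k, Summable fun i => RCLike.re ⟪f i, σs k (f i)⟫_ℂ := fun k =>
    (hσstc k).congr fun i => by rw [absOp_of_nonneg (hσs0 k)]
  have hMspos : ∀ k, 0 ≤ TP.map 1 (σs k) := fun k => TP.map_one_pos (hσs0 k)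
  have hMpos : 0 ≤ TP.map 1 σ := TP.map_one_pos hσ0
  -- Step 1: for each k, ρs k ≤ r • (1 ⊗ σs k)
  have hk : ∀ k, ρs k ≤ r • TP.map 1 (σs k) := by
    intro k
    have h1 : LamCond TP (ρs k) (σs k) < (r : EReal) := lt_of_le_of_lt (hlevel k) hr1
    rw [LamCond] at h1
    obtain ⟨x, hxmem, hxlt⟩ := sInf_lt_iff.mp h1
    obtain ⟨l, rfl, hle⟩ := hxmem
    have hlr : l ≤ r := by exact_mod_cast hxlt.le
    refine hle.trans ?_
    rw [← sub_nonneg, ← sub_smul]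
    exact smul_nonneg_op (by linarith) (hMspos k)
  -- Step 2: pass to the limit in the quadratic forms
  have hfinal : ρ ≤ r • TP.map 1 σ := by
    rw [ContinuousLinearMap.le_def]
    constructor
    · have hsa1 : IsSelfAdjoint (r • TP.map 1 σ) := by
        rw [IsSelfAdjoint, star_smul, star_trivial,
          ((nonneg_iff_isPositive _).mp hMpos).isSelfAdjoint.star_eq]
      exact isSelfAdjoint_iff_isSymmetric.mp (hsa1.sub hρpos.isSelfAdjoint)
    · intro x
      rw [ContinuousLinearMap.reApplyInnerSelf_apply, re_inner_flip]
      have hρlim : Tendsto (fun k => RCLike.re ⟪x, (ρs k) x⟫_ℂ - RCLike.re ⟪x, ρ x⟫_ℂ)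
          atTop (nhds 0) := by
        apply squeeze_zero_norm (a := fun k => ‖x‖ ^ 2 * trNormAlong e (ρs k - ρ))
        · intro k
          have heq : RCLike.re ⟪x, (ρs k) x⟫_ℂ - RCLike.re ⟪x, ρ x⟫_ℂ
              = RCLike.re ⟪x, (ρs k - ρ) x⟫_ℂ := by
            rw [ContinuousLinearMap.sub_apply, inner_sub_right, map_sub]
          rw [Real.norm_eq_abs, heq]
          exact re_inner_le_trNorm e (hρs0 k) hρ0 (hρssum k) hρsum x
        · have := hconvρ.const_mul (‖x‖ ^ 2)
          simpa using this
      have hσlim : Tendsto (fun k => RCLike.re ⟪x, (TP.map 1 (σs k)) x⟫_ℂ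
          - RCLike.re ⟪x, (TP.map 1 σ) x⟫_ℂ) atTop (nhds 0) := by
        apply squeeze_zero_norm (a := fun k => ‖x‖ ^ 2 * trNormAlong f (σs k - σ))
        · intro k
          have heq : RCLike.re ⟪x, (TP.map 1 (σs k)) x⟫_ℂ - RCLike.re ⟪x, (TP.map 1 σ) x⟫_ℂ
              = RCLike.re ⟪x, (TP.map 1 (σs k) - TP.map 1 σ) x⟫_ℂ := by
            rw [ContinuousLinearMap.sub_apply, inner_sub_right, map_sub]
          rw [Real.norm_eq_abs, heq]
          exact tensor_quad_bound TP f (hσs0 k) hσ0 (hσssum k) hσsum x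
        · have := hconvσ.const_mul (‖x‖ ^ 2)
          simpa using this
      have hL : Tendsto (fun k => r * RCLike.re ⟪x, (TP.map 1 (σs k)) x⟫_ℂ
          - RCLike.re ⟪x, (ρs k) x⟫_ℂ) atTop
          (nhds (r * RCLike.re ⟪x, (TP.map 1 σ) x⟫_ℂ - RCLike.re ⟪x, ρ x⟫_ℂ)) :=
        ((tendsto_sub_nhds_zero_iff.mp hσlim).const_mul r).sub
          (tendsto_sub_nhds_zero_iff.mp hρlim)
      have hLnn : ∀ k, 0 ≤ r * RCLike.re ⟪x, (TP.map 1 (σs k)) x⟫_ℂ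
          - RCLike.re ⟪x, (ρs k) x⟫_ℂ := by
        intro k
        have h2 := diag_mono (hk k) x
        rw [re_inner_smul_op] at h2
        linarith
      have h0 := ge_of_tendsto' hL hLnn
      have heq2 : RCLike.re ⟪x, (r • TP.map 1 σ - ρ) x⟫_ℂ
          = r * RCLike.re ⟪x, (TP.map 1 σ) x⟫_ℂ - RCLike.re ⟪x, ρ x⟫_ℂ := by
        rw [ContinuousLinearMap.sub_apply, inner_sub_right, map_sub, re_inner_smul_op]
      rw [heq2]
      exact h0
  have hmem : (r : EReal) ∈ {x : EReal | ∃ l : ℝ, x = (l : EReal) ∧ ρ ≤ l • TP.map 1 σ} :=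
    ⟨r, rfl, hfinal⟩
  exact absurd hr2 (not_lt.mpr (sInf_le hmem))


end
end

section
/- Let ρ_AB = |ψ⟩⟨ψ| be a pure state on H_A ⊗ H_B with reduced state ρ_A = tr_B ρ_AB, and suppose √ρ_A is trace class. Then the operator σ̃_B := tr(√ρ_A)·√ρ_B (with ρ_B = tr_A ρ_AB) satisfies id_A ⊗ σ̃_B ≥ ρ_AB. -/
open scoped InnerProductSpace ComplexOrder
open ContinuousLinearMap Filter Topology

set_option synthInstance.maxHeartbeats 1000000
set_option maxHeartbeats 1600000

noncomputable section

/-- Real smul equals complex smul of the coercion. -/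
private lemma rsmul_eq {E : Type*} [AddCommGroup E] [Module ℂ E] (c : ℝ) (z : E) :
    c • z = (c : ℂ) • z := by
  rw [← algebraMap_smul ℂ c z, Complex.coe_algebraMap]

/-- Cauchy–Schwarz for infinite sums. -/
private lemma tsum_cs {f g : ℕ → ℝ} (hf : Summable fun k => f k ^ 2)
    (hg : Summable fun k => g k ^ 2) :
    (∑' k, f k * g k) ^ 2 ≤ (∑' k, f k ^ 2) * ∑' k, g k ^ 2 := by
  have hfg : Summable fun k => f k * g k := by
    refine Summable.of_norm_bounded (((hf.add hg).mul_left (1/2))) fun k => ?_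
    rw [Real.norm_eq_abs, abs_mul]
    nlinarith [sq_nonneg (|f k| - |g k|), sq_abs (f k), sq_abs (g k), abs_nonneg (f k),
      abs_nonneg (g k)]
  have h1 : Filter.Tendsto (fun s : Finset ℕ => (∑ k ∈ s, f k * g k) ^ 2) Filter.atTop
      (𝓝 ((∑' k, f k * g k) ^ 2)) := hfg.hasSum.pow 2
  refine le_of_tendsto h1 (Filter.Eventually.of_forall fun s => ?_)
  calc (∑ k ∈ s, f k * g k) ^ 2 ≤ (∑ k ∈ s, f k ^ 2) * ∑ k ∈ s, g k ^ 2 :=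
        Finset.sum_mul_sq_le_sq_mul_sq s f g
    _ ≤ (∑' k, f k ^ 2) * ∑' k, g k ^ 2 := by
        have h2 := hf.sum_le_tsum s (fun i _ => sq_nonneg (f i))
        have h3 := hg.sum_le_tsum s (fun i _ => sq_nonneg (g i))
        have h4 : (0:ℝ) ≤ ∑ k ∈ s, f k ^ 2 := Finset.sum_nonneg fun i _ => sq_nonneg _
        have h5 : (0:ℝ) ≤ ∑ k ∈ s, g k ^ 2 := Finset.sum_nonneg fun i _ => sq_nonneg _
        nlinarith


/-- For a pure state with Schmidt decomposition `ψ = Σ r_k a_k ⊗ b_k` with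
`Σ r_k < ∞` (`√ρ_A` trace class), the operator `σ̃_B = (tr √ρ_A)·√ρ_B` satisfies
`id_A ⊗ σ̃_B ≥ |ψ⟩⟨ψ|`. -/
theorem pure_state_sqrt_witness
    {HA HB H : Type*} [NormedAddCommGroup HA] [InnerProductSpace ℂ HA]
    [TopologicalSpace.SeparableSpace HA]
    [NormedAddCommGroup HB] [InnerProductSpace ℂ HB] [CompleteSpace HB]
    [TopologicalSpace.SeparableSpace HB]
    [NormedAddCommGroup H] [InnerProductSpace ℂ H] [CompleteSpace H]
    (TP : HilbertTensor HA HB H)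
    (a : ℕ → HA) (b : ℕ → HB) (r : ℕ → ℝ)
    (ha : Orthonormal ℂ a) (hb : Orthonormal ℂ b)
    (hr : ∀ k, 0 ≤ r k) (hsq : Summable fun k => (r k) ^ 2)
    (hnorm : ∑' k, (r k) ^ 2 = 1)
    (ψ : H) (hψ : ψ = ∑' k, (r k : ℂ) • TP.tmul (a k) (b k))
    (hsum : Summable r) :
    dyad ψ ψ ≤ TP.map 1 ((∑' k, r k) • ∑' k, r k • dyad (b k) (b k)) := by
  classical
  have hbi := orthonormal_iff_ite.mp hb
  have hai := orthonormal_iff_ite.mp ha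
  -- norms of elementary tensors
  have hnt : ∀ (x : HA) (y : HB), ‖TP.tmul x y‖ = ‖x‖ * ‖y‖ := by
    intro x y
    have h1 := TP.inner_tmul x x y y
    rw [inner_self_eq_norm_sq_to_K, inner_self_eq_norm_sq_to_K,
      inner_self_eq_norm_sq_to_K] at h1
    have h2 : ‖TP.tmul x y‖ ^ 2 = (‖x‖ * ‖y‖) ^ 2 := by
      rw [mul_pow]; exact_mod_cast h1
    rw [← Real.sqrt_sq (norm_nonneg (TP.tmul x y)), h2,
      Real.sqrt_sq (mul_nonneg (norm_nonneg x) (norm_nonneg y))]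
  have hne : ∀ k, ‖TP.tmul (a k) (b k)‖ = 1 := fun k => by
    rw [hnt, ha.1 k, hb.1 k, mul_one]
  -- continuity of the partial tensor map
  have htc : ∀ x : HA, ∃ tmx : HB →L[ℂ] H, ∀ y, tmx y = TP.tmul x y := by
    intro x
    exact ⟨LinearMap.mkContinuous (TP.tmul x) ‖x‖ (fun y => (hnt x y).le), fun y => rfl⟩
  -- extensionality from density of simple tensors
  have hext : ∀ (S T : H →L[ℂ] H), (∀ x y, S (TP.tmul x y) = T (TP.tmul x y)) → S = T := by
    intro S T hST
    refine ContinuousLinearMap.ext_on TP.dense_span ?_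
    rintro z ⟨x, y, rfl⟩
    exact hST x y
  have hextC : ∀ (S T : H →L[ℂ] ℂ), (∀ x y, S (TP.tmul x y) = T (TP.tmul x y)) → S = T := by
    intro S T hST
    refine ContinuousLinearMap.ext_on TP.dense_span ?_
    rintro z ⟨x, y, rfl⟩
    exact hST x y
  -- the partial projections
  set P : ℕ → (H →L[ℂ] H) := fun k => TP.map 1 (dyad (b k) (b k)) with hPdef
  have hPt : ∀ k (x : HA) (y : HB),
      P k (TP.tmul x y) = ⟪b k, y⟫_ℂ • TP.tmul x (b k) := by
    intro k x y
    rw [hPdef]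
    simp only [TP.map_tmul, ContinuousLinearMap.one_apply, dyad,
      ContinuousLinearMap.smulRight_apply, innerSL_apply_apply, map_smul]
  have hbb : ∀ k, ⟪b k, b k⟫_ℂ = 1 := fun k => by rw [hbi]; simp
  have hPe : ∀ k, P k (TP.tmul (a k) (b k)) = TP.tmul (a k) (b k) := by
    intro k; rw [hPt, hbb, one_smul]
  -- the key self-adjointness identity
  have hkeyA : ∀ k (u v : H), ⟪P k u, P k v⟫_ℂ = ⟪u, P k v⟫_ℂ := by
    intro k
    have h1 : ∀ (x₁ : HA) (y₁ : HB) (x₂ : HA) (y₂ : HB),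
        ⟪P k (TP.tmul x₂ y₂), P k (TP.tmul x₁ y₁)⟫_ℂ
          = ⟪P k (TP.tmul x₂ y₂), TP.tmul x₁ y₁⟫_ℂ := by
      intro x₁ y₁ x₂ y₂
      rw [hPt, hPt, inner_smul_left, inner_smul_left, inner_smul_right,
        TP.inner_tmul, TP.inner_tmul, hbb]
      ring
    have h2 : ∀ (x₂ : HA) (y₂ : HB) (u : H),
        ⟪P k (TP.tmul x₂ y₂), P k u⟫_ℂ = ⟪P k (TP.tmul x₂ y₂), u⟫_ℂ := by
      intro x₂ y₂
      have heq := hextC ((innerSL ℂ (P k (TP.tmul x₂ y₂))).comp (P k))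
        (innerSL ℂ (P k (TP.tmul x₂ y₂)))
        (fun x y => by simpa using h1 x y x₂ y₂)
      intro u
      simpa using ContinuousLinearMap.ext_iff.mp heq u
    have h3 : ∀ (u : H) (x₂ : HA) (y₂ : HB),
        ⟪P k u, P k (TP.tmul x₂ y₂)⟫_ℂ = ⟪u, P k (TP.tmul x₂ y₂)⟫_ℂ := by
      intro u x₂ y₂
      have hc := congrArg (starRingEnd ℂ) (h2 x₂ y₂ u)
      simpa [inner_conj_symm] using hc
    intro u
    have heq := hextC ((innerSL ℂ (P k u)).comp (P k)) ((innerSL ℂ u).comp (P k))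
      (fun x y => by simpa using h3 u x y)
    intro v
    simpa using ContinuousLinearMap.ext_iff.mp heq v
  have hkeyB : ∀ k (u v : H), ⟪P k u, P k v⟫_ℂ = ⟪P k u, v⟫_ℂ := by
    intro k u v
    have hc := congrArg (starRingEnd ℂ) (hkeyA k v u)
    simpa [inner_conj_symm] using hc
  -- norm bound for P
  have hPle : ∀ k (x : H), ‖P k x‖ ≤ ‖x‖ := by
    intro k x
    have h1 : ‖P k x‖ ^ 2 = RCLike.re ⟪P k x, P k x⟫_ℂ := (inner_self_eq_norm_sq _).symm
    rw [hkeyA k x x] at h1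
    have h2 : RCLike.re ⟪x, P k x⟫_ℂ ≤ ‖⟪x, P k x⟫_ℂ‖ := RCLike.re_le_norm _
    have h3 : ‖⟪x, P k x⟫_ℂ‖ ≤ ‖x‖ * ‖P k x‖ := norm_inner_le_norm _ _
    nlinarith [norm_nonneg (P k x), norm_nonneg x]
  have hPee : ∀ k (u : H), ⟪TP.tmul (a k) (b k), P k u⟫_ℂ = ⟪TP.tmul (a k) (b k), u⟫_ℂ := by
    intro k u
    have := hkeyB k (TP.tmul (a k) (b k)) u
    rwa [hPe] at this
  have hPxx : ∀ k (x : H), ⟪x, P k x⟫_ℂ = ((‖P k x‖ ^ 2 : ℝ) : ℂ) := by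
    intro k x
    rw [← hkeyA k x x, inner_self_eq_norm_sq_to_K]
    norm_cast
  -- summability of the operator series
  have hPnorm : ∀ k, ‖P k‖ ≤ 1 := fun k =>
    ContinuousLinearMap.opNorm_le_bound _ zero_le_one (fun x => by
      rw [one_mul]; exact hPle k x)
  have hQs : Summable fun k => (r k : ℂ) • P k := by
    refine Summable.of_norm_bounded hsum fun k => ?_
    rw [norm_smul, Complex.norm_real, Real.norm_eq_abs, abs_of_nonneg (hr k)]
    calc r k * ‖P k‖ ≤ r k * 1 := mul_le_mul_of_nonneg_left (hPnorm k) (hr k)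
      _ = r k := mul_one _
  set Q : H →L[ℂ] H := ∑' k, (r k : ℂ) • P k with hQdef
  have hdn : ∀ k, ‖dyad (b k) (b k)‖ ≤ 1 := by
    intro k
    rw [dyad, ContinuousLinearMap.norm_smulRight_apply, innerSL_apply_norm, hb.1 k, one_mul]
  have hσs : Summable fun k => (r k : ℂ) • dyad (b k) (b k) := by
    refine Summable.of_norm_bounded hsum fun k => ?_
    rw [norm_smul, Complex.norm_real, Real.norm_eq_abs, abs_of_nonneg (hr k)]
    calc r k * ‖dyad (b k) (b k)‖ ≤ r k * 1 := mul_le_mul_of_nonneg_left (hdn k) (hr k)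
      _ = r k := mul_one _
  -- identification of the tensor extension
  set c : ℝ := ∑' k, r k with hcdef
  have hgr : (((∑' k, r k) • ∑' k, r k • dyad (b k) (b k)) : HB →L[ℂ] HB)
      = (c : ℂ) • ∑' k, (r k : ℂ) • dyad (b k) (b k) := by
    rw [← hcdef]
    simp only [rsmul_eq]
  have hmap : TP.map 1 ((c : ℂ) • ∑' k, (r k : ℂ) • dyad (b k) (b k)) = (c : ℂ) • Q := by
    apply hext
    intro x y
    obtain ⟨tmx, htmx⟩ := htc x
    have happ : (∑' k, (r k : ℂ) • dyad (b k) (b k)) y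
        = ∑' k, (r k : ℂ) • (⟪b k, y⟫_ℂ • b k) := by
      have h := (ContinuousLinearMap.apply ℂ HB y).map_tsum hσs
      simp only [ContinuousLinearMap.apply_apply] at h
      rw [h]
      exact tsum_congr fun k => by simp [dyad]
    have hsumy : Summable fun k => (r k : ℂ) • (⟪b k, y⟫_ℂ • b k) :=
      hσs.mapL (ContinuousLinearMap.apply ℂ HB y) |>.congr (fun k => by simp [dyad])
    calc TP.map 1 ((c : ℂ) • ∑' k, (r k : ℂ) • dyad (b k) (b k)) (TP.tmul x y)
        = TP.tmul x (((c : ℂ) • ∑' k, (r k : ℂ) • dyad (b k) (b k)) y) := by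
          rw [TP.map_tmul]; simp
      _ = tmx ((c : ℂ) • ∑' k, (r k : ℂ) • (⟪b k, y⟫_ℂ • b k)) := by
          rw [htmx, ContinuousLinearMap.smul_apply, happ]
      _ = (c : ℂ) • ∑' k, (r k : ℂ) • (⟪b k, y⟫_ℂ • TP.tmul x (b k)) := by
          rw [map_smul, tmx.map_tsum hsumy]
          congr 1
          exact tsum_congr fun k => by rw [map_smul, map_smul, htmx]
      _ = ((c : ℂ) • Q) (TP.tmul x y) := by
          rw [ContinuousLinearMap.smul_apply, hQdef]
          have h := (ContinuousLinearMap.apply ℂ H (TP.tmul x y)).map_tsum hQs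
          simp only [ContinuousLinearMap.apply_apply] at h
          rw [h]
          congr 1
          exact tsum_congr fun k => by rw [ContinuousLinearMap.smul_apply, hPt]
  rw [hgr, hmap, ContinuousLinearMap.le_def, ContinuousLinearMap.isPositive_iff_complex]
  intro x
  -- compute the quadratic form of Q
  have hQax : Summable fun k => (r k : ℂ) • P k x := by
    have h := hQs.mapL (ContinuousLinearMap.apply ℂ H x)
    simpa only [ContinuousLinearMap.apply_apply, ContinuousLinearMap.smul_apply] using h
  have hQx : Q x = ∑' k, (r k : ℂ) • P k x := by
    rw [hQdef]
    have h := (ContinuousLinearMap.apply ℂ H x).map_tsum hQs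
    simp only [ContinuousLinearMap.apply_apply] at h
    rw [h]
    exact tsum_congr fun k => by rw [ContinuousLinearMap.smul_apply]
  have hS : Summable fun k => r k * ‖P k x‖ ^ 2 := by
    refine Summable.of_nonneg_of_le
      (fun k => mul_nonneg (hr k) (sq_nonneg _)) (fun k => ?_) (hsum.mul_right (‖x‖ ^ 2))
    have := hPle k x
    have h0 : ‖P k x‖ ^ 2 ≤ ‖x‖ ^ 2 := by nlinarith [norm_nonneg (P k x), norm_nonneg x]
    exact mul_le_mul_of_nonneg_left h0 (hr k)
  set S : ℝ := ∑' k, r k * ‖P k x‖ ^ 2 with hSdef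
  have hQxx : ⟪x, Q x⟫_ℂ = ((S : ℝ) : ℂ) := by
    rw [hQx]
    have h := (innerSL ℂ x).map_tsum hQax
    simp only [innerSL_apply_apply] at h
    rw [h]
    have h2 : ∀ k, ⟪x, (r k : ℂ) • P k x⟫_ℂ = ((r k * ‖P k x‖ ^ 2 : ℝ) : ℂ) := by
      intro k
      rw [inner_smul_right, hPxx]
      push_cast; ring
    rw [tsum_congr h2, hSdef, Complex.ofReal_tsum]
  have hQxx' : ⟪Q x, x⟫_ℂ = ((S : ℝ) : ℂ) := by
    rw [← inner_conj_symm, hQxx, Complex.conj_ofReal]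
  -- compute the quadratic form of the dyad
  have hdy : ⟪dyad ψ ψ x, x⟫_ℂ = ((‖⟪ψ, x⟫_ℂ‖ ^ 2 : ℝ) : ℂ) := by
    simp only [dyad, ContinuousLinearMap.smulRight_apply, innerSL_apply_apply, inner_smul_left]
    rw [mul_comm, Complex.mul_conj]
    rw [Complex.normSq_eq_norm_sq]
  -- the master inequality
  have hψs : Summable fun k => (r k : ℂ) • TP.tmul (a k) (b k) := by
    refine Summable.of_norm_bounded hsum fun k => ?_
    rw [norm_smul, Complex.norm_real, Real.norm_eq_abs, abs_of_nonneg (hr k), hne, mul_one]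
  have hxe : ∀ k, ‖⟪x, TP.tmul (a k) (b k)⟫_ℂ‖ ≤ ‖P k x‖ := by
    intro k
    rw [norm_inner_symm, ← hPee k x]
    calc ‖⟪TP.tmul (a k) (b k), P k x⟫_ℂ‖ ≤ ‖TP.tmul (a k) (b k)‖ * ‖P k x‖ :=
        norm_inner_le_norm _ _
      _ = ‖P k x‖ := by rw [hne, one_mul]
  have hsn : Summable fun k => r k * ‖P k x‖ := by
    refine Summable.of_nonneg_of_le (fun k => mul_nonneg (hr k) (norm_nonneg _))
      (fun k => mul_le_mul_of_nonneg_left (hPle k x) (hr k)) (hsum.mul_right ‖x‖)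
  have hn1 : ‖⟪ψ, x⟫_ℂ‖ ≤ ∑' k, r k * ‖P k x‖ := by
    rw [norm_inner_symm, hψ]
    have hinner : ⟪x, ∑' k, (r k : ℂ) • TP.tmul (a k) (b k)⟫_ℂ
        = ∑' k, (r k : ℂ) * ⟪x, TP.tmul (a k) (b k)⟫_ℂ := by
      have h := (innerSL ℂ x).map_tsum hψs
      simp only [innerSL_apply_apply] at h
      rw [h]
      exact tsum_congr fun k => inner_smul_right _ _ _
    rw [hinner]
    have hnormsum : Summable fun k => ‖(r k : ℂ) * ⟪x, TP.tmul (a k) (b k)⟫_ℂ‖ := by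
      refine Summable.of_nonneg_of_le (fun k => norm_nonneg _) (fun k => ?_) hsn
      rw [norm_mul, Complex.norm_real, Real.norm_eq_abs, abs_of_nonneg (hr k)]
      exact mul_le_mul_of_nonneg_left (hxe k) (hr k)
    calc ‖∑' k, (r k : ℂ) * ⟪x, TP.tmul (a k) (b k)⟫_ℂ‖
        ≤ ∑' k, ‖(r k : ℂ) * ⟪x, TP.tmul (a k) (b k)⟫_ℂ‖ := norm_tsum_le_tsum_norm hnormsum
      _ ≤ ∑' k, r k * ‖P k x‖ := by
          refine hnormsum.tsum_le_tsum (fun k => ?_) hsn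
          rw [norm_mul, Complex.norm_real, Real.norm_eq_abs, abs_of_nonneg (hr k)]
          exact mul_le_mul_of_nonneg_left (hxe k) (hr k)
  have hcs : (∑' k, r k * ‖P k x‖) ^ 2 ≤ c * S := by
    have h1 : ∀ k, r k * ‖P k x‖ = Real.sqrt (r k) * (Real.sqrt (r k) * ‖P k x‖) := by
      intro k
      rw [← mul_assoc, Real.mul_self_sqrt (hr k)]
    have h2 : ∀ k, Real.sqrt (r k) ^ 2 = r k := fun k => Real.sq_sqrt (hr k)
    have h3 : ∀ k, (Real.sqrt (r k) * ‖P k x‖) ^ 2 = r k * ‖P k x‖ ^ 2 := by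
      intro k; rw [mul_pow, h2]
    calc (∑' k, r k * ‖P k x‖) ^ 2
        = (∑' k, Real.sqrt (r k) * (Real.sqrt (r k) * ‖P k x‖)) ^ 2 := by
          rw [tsum_congr h1]
      _ ≤ (∑' k, Real.sqrt (r k) ^ 2) * ∑' k, (Real.sqrt (r k) * ‖P k x‖) ^ 2 :=
          tsum_cs (by simpa only [h2] using hsum) (by simpa only [h3] using hS)
      _ = c * S := by rw [tsum_congr h2, tsum_congr h3, hcdef, hSdef]
  have hineq : ‖⟪ψ, x⟫_ℂ‖ ^ 2 ≤ c * S := by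
    have h0 : (0:ℝ) ≤ ∑' k, r k * ‖P k x‖ :=
      tsum_nonneg fun k => mul_nonneg (hr k) (norm_nonneg _)
    nlinarith [norm_nonneg (⟪ψ, x⟫_ℂ)]
  -- assemble
  have hTx : ⟪((c : ℂ) • Q - dyad ψ ψ) x, x⟫_ℂ = ((c * S - ‖⟪ψ, x⟫_ℂ‖ ^ 2 : ℝ) : ℂ) := by
    rw [ContinuousLinearMap.sub_apply, inner_sub_left, ContinuousLinearMap.smul_apply,
      inner_smul_left, hQxx', hdy, Complex.conj_ofReal]
    push_cast; ring
  rw [hTx]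
  constructor
  · simp [← Complex.ofReal_pow]
  · simpa [← Complex.ofReal_pow] using sub_nonneg.mpr hineq


end
end

section
/- Let ρ_AB = |ψ⟩⟨ψ| be a pure state on H_A ⊗ H_B such that √ρ_A is not trace class (i.e., the sum of the Schmidt coefficients of ψ diverges). Then there is no positive trace-class operator σ̃_B on H_B with id_A ⊗ σ̃_B ≥ ρ_AB; equivalently H_min(ρ_AB|B) = −∞. -/
open scoped InnerProductSpace ComplexOrder
open ContinuousLinearMap Filter Topology

set_option synthInstance.maxHeartbeats 1000000
set_option maxHeartbeats 1600000

noncomputable section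

lemma parseval_aux {HB : Type*} [NormedAddCommGroup HB] [InnerProductSpace ℂ HB]
    [CompleteSpace HB] {κ : Type*} (f : HilbertBasis κ ℂ HB) (x : HB) :
    ‖x‖ ^ 2 = ∑' i, ‖⟪f i, x⟫_ℂ‖ ^ 2 := by
  have h := f.tsum_inner_mul_inner x x
  have h2 : (fun i => ⟪x, f i⟫_ℂ * ⟪f i, x⟫_ℂ)
      = fun i => ((‖⟪f i, x⟫_ℂ‖ ^ 2 : ℝ) : ℂ) := by
    funext i
    rw [← inner_conj_symm (𝕜 := ℂ) x (f i), RCLike.conj_mul]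
    norm_cast
  rw [h2] at h
  have hs : Summable fun i => ‖⟪f i, x⟫_ℂ‖ ^ 2 := f.orthonormal.inner_products_summable x
  rw [← Complex.ofReal_tsum] at h
  have h3 : ⟪x, x⟫_ℂ = ((‖x‖ ^ 2 : ℝ) : ℂ) := by
    rw [inner_self_eq_norm_sq_to_K]; norm_cast
  rw [h3] at h
  exact_mod_cast h.symm

lemma diag_sum_le_trace_aux {HB : Type*} [NormedAddCommGroup HB] [InnerProductSpace ℂ HB]
    [CompleteSpace HB] {κ : Type*} (f : HilbertBasis κ ℂ HB) (s : HB →L[ℂ] HB)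
    (hs : IsSelfAdjoint s) (htc : Summable fun i => ‖s (f i)‖ ^ 2)
    (b : ℕ → HB) (hb : Orthonormal ℂ b) (F : Finset ℕ) :
    ∑ k ∈ F, ‖s (b k)‖ ^ 2 ≤ ∑' i, ‖s (f i)‖ ^ 2 := by
  have hsum : ∀ k, Summable fun i => ‖⟪f i, s (b k)⟫_ℂ‖ ^ 2 := fun k =>
    f.orthonormal.inner_products_summable (s (b k))
  have key : ∀ i, ∑ k ∈ F, ‖⟪f i, s (b k)⟫_ℂ‖ ^ 2 ≤ ‖s (f i)‖ ^ 2 := by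
    intro i
    have he : ∀ k, ‖⟪f i, s (b k)⟫_ℂ‖ = ‖⟪b k, s (f i)⟫_ℂ‖ := by
      intro k
      rw [show s (b k) = (ContinuousLinearMap.adjoint s) (b k) by rw [hs.adjoint_eq],
        ContinuousLinearMap.adjoint_inner_right]
      exact norm_inner_symm _ _
    calc ∑ k ∈ F, ‖⟪f i, s (b k)⟫_ℂ‖ ^ 2 = ∑ k ∈ F, ‖⟪b k, s (f i)⟫_ℂ‖ ^ 2 := by
          simp_rw [he]
      _ ≤ ‖s (f i)‖ ^ 2 := hb.sum_inner_products_le (s (f i))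
  calc ∑ k ∈ F, ‖s (b k)‖ ^ 2 = ∑ k ∈ F, ∑' i, ‖⟪f i, s (b k)⟫_ℂ‖ ^ 2 := by
        simp_rw [← parseval_aux f]
    _ = ∑' i, ∑ k ∈ F, ‖⟪f i, s (b k)⟫_ℂ‖ ^ 2 := (Summable.tsum_finsetSum fun k _ => hsum k).symm
    _ ≤ ∑' i, ‖s (f i)‖ ^ 2 :=
        Summable.tsum_le_tsum key (summable_sum fun k _ => hsum k) htc

/-- For a pure state whose Schmidt coefficients are not summable
(`√ρ_A` not trace class), no positive trace-class `σ̃_B` satisfies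
`id_A ⊗ σ̃_B ≥ |ψ⟩⟨ψ|`; i.e. `H_min(ρ_AB|B) = -∞`. -/
theorem pure_state_min_entropy_bot
    {HA HB H : Type*} [NormedAddCommGroup HA] [InnerProductSpace ℂ HA]
    [TopologicalSpace.SeparableSpace HA]
    [NormedAddCommGroup HB] [InnerProductSpace ℂ HB] [CompleteSpace HB]
    [TopologicalSpace.SeparableSpace HB]
    [NormedAddCommGroup H] [InnerProductSpace ℂ H] [CompleteSpace H]
    (TP : HilbertTensor HA HB H)
    (a : ℕ → HA) (b : ℕ → HB) (r : ℕ → ℝ)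
    (ha : Orthonormal ℂ a) (hb : Orthonormal ℂ b)
    (hr : ∀ k, 0 ≤ r k) (hsq : Summable fun k => (r k) ^ 2)
    (hnorm : ∑' k, (r k) ^ 2 = 1)
    (ψ : H) (hψ : ψ = ∑' k, (r k : ℂ) • TP.tmul (a k) (b k))
    (hnsum : ¬ Summable r) {κ : Type*} (f : HilbertBasis κ ℂ HB) :
    ¬ ∃ σ : HB →L[ℂ] HB, σ.IsPositive ∧ IsTraceClass f σ ∧
        dyad ψ ψ ≤ TP.map 1 σ := by
  rintro ⟨σ, hpos, htc, hle⟩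
  have hσ0 : (0 : HB →L[ℂ] HB) ≤ σ := (ContinuousLinearMap.nonneg_iff_isPositive σ).2 hpos
  set s : HB →L[ℂ] HB := CFC.sqrt σ with hs_def
  have hs0 : (0 : HB →L[ℂ] HB) ≤ s := CFC.sqrt_nonneg σ
  have hssa : IsSelfAdjoint s := hs0.isSelfAdjoint
  have hss : s * s = σ := CFC.sqrt_mul_sqrt_self σ hσ0
  -- diagonal entries via sqrt
  have hinner : ∀ x : HB, RCLike.re ⟪x, σ x⟫_ℂ = ‖s x‖ ^ 2 := by
    intro x
    have h1 : σ x = s (s x) := by rw [← hss]; rfl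
    rw [h1, ← ContinuousLinearMap.adjoint_inner_left s (s x) x, hssa.adjoint_eq]
    exact inner_self_eq_norm_sq _
  -- absOp σ = σ
  have habs : absOp σ = σ := by
    unfold absOp
    rw [hpos.isSelfAdjoint.adjoint_eq]
    exact CFC.sqrt_mul_self σ hσ0
  have htc' : Summable fun i => ‖s (f i)‖ ^ 2 := by
    have := htc
    unfold IsTraceClass at this
    rw [habs] at this
    simpa [hinner] using this
  have htr : trAlong f σ = ∑' i, ‖s (f i)‖ ^ 2 := tsum_congr fun i => hinner (f i)
  -- orthonormal family e
  set e : ℕ → H := fun k => TP.tmul (a k) (b k) with he_def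
  have he : Orthonormal ℂ e := by
    rw [orthonormal_iff_ite]
    intro j k
    have := TP.inner_tmul (a j) (a k) (b j) (b k)
    rw [he_def]
    simp only []
    rw [this, orthonormal_iff_ite.mp ha, orthonormal_iff_ite.mp hb]
    by_cases h : j = k <;> simp [h]
  -- summability and HasSum
  have hsumm : Summable fun k => (r k : ℂ) • e k := by
    have h2 : Summable fun k => ‖(r k : ℂ)‖ ^ 2 := by
      have : (fun k => ‖(r k : ℂ)‖ ^ 2) = fun k => (r k) ^ 2 := by
        funext k
        rw [Complex.norm_real, Real.norm_eq_abs, sq_abs]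
      rw [this]; exact hsq
    have := (he.orthogonalFamily.summable_iff_norm_sq_summable fun k => (r k : ℂ)).2 h2
    simpa [LinearIsometry.toSpanSingleton_apply] using this
  have hψsum : HasSum (fun k => (r k : ℂ) • e k) ψ := by
    rw [hψ]; exact hsumm.hasSum
  -- inner products with ψ
  have hinnerψ : ∀ j, ⟪e j, ψ⟫_ℂ = (r j : ℂ) := by
    intro j
    have h1 : HasSum (fun k => ⟪e j, (r k : ℂ) • e k⟫_ℂ) ⟪e j, ψ⟫_ℂ :=
      hψsum.mapL (innerSL ℂ (e j))
    rw [← h1.tsum_eq, tsum_eq_single j]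
    · rw [inner_smul_right, orthonormal_iff_ite.mp he]
      simp
    · intro k hk
      rw [inner_smul_right, orthonormal_iff_ite.mp he]
      simp [Ne.symm hk]
  -- key finset bound
  have key : ∀ F : Finset ℕ, (∑ k ∈ F, r k) ^ 2 ≤ trAlong f σ := by
    intro F
    set φ : H := ∑ k ∈ F, e k with hφ_def
    have hφψ : ⟪φ, ψ⟫_ℂ = ((∑ k ∈ F, r k : ℝ) : ℂ) := by
      rw [hφ_def, sum_inner]
      push_cast
      exact Finset.sum_congr rfl fun k _ => hinnerψ k
    have hd : RCLike.re ⟪φ, dyad ψ ψ φ⟫_ℂ = (∑ k ∈ F, r k) ^ 2 := by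
      have h1 : dyad ψ ψ φ = ⟪ψ, φ⟫_ℂ • ψ := rfl
      rw [h1, inner_smul_right, ← inner_conj_symm (𝕜 := ℂ) ψ φ, hφψ]
      simp [← Complex.ofReal_mul, sq]
    have hm : RCLike.re ⟪φ, TP.map 1 σ φ⟫_ℂ = ∑ k ∈ F, ‖s (b k)‖ ^ 2 := by
      have hmap : TP.map 1 σ φ = ∑ k ∈ F, TP.tmul (a k) (σ (b k)) := by
        rw [hφ_def, map_sum]
        refine Finset.sum_congr rfl fun k _ => ?_
        rw [he_def]
        simp only []
        rw [TP.map_tmul]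
        simp
      have h2 : ⟪φ, TP.map 1 σ φ⟫_ℂ = ∑ k ∈ F, ⟪b k, σ (b k)⟫_ℂ := by
        rw [hmap, hφ_def, sum_inner]
        rw [Finset.sum_congr rfl fun j _ => inner_sum F (fun k => TP.tmul (a k) (σ (b k))) (e j)]
        rw [Finset.sum_congr rfl fun j (_ : j ∈ F) => Finset.sum_congr rfl fun k (_ : k ∈ F) =>
          TP.inner_tmul (a j) (a k) (b j) (σ (b k))]
        rw [Finset.sum_congr rfl fun j (_ : j ∈ F) => Finset.sum_congr rfl fun k (_ : k ∈ F) => by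
          rw [orthonormal_iff_ite.mp ha j k]]
        simp only [ite_mul, one_mul, zero_mul, Finset.sum_ite_eq]
        exact Finset.sum_congr rfl fun j hj => if_pos hj
      rw [h2, map_sum]
      exact Finset.sum_congr rfl fun k _ => hinner (b k)
    have hposle : RCLike.re ⟪φ, dyad ψ ψ φ⟫_ℂ ≤ RCLike.re ⟪φ, TP.map 1 σ φ⟫_ℂ := by
      have h := (ContinuousLinearMap.le_def _ _).1 hle
      have h2 := h.inner_nonneg_right φ
      rw [ContinuousLinearMap.sub_apply, inner_sub_right, Complex.le_def, Complex.zero_re, Complex.sub_re] at h2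
      exact sub_nonneg.1 h2.1
    calc (∑ k ∈ F, r k) ^ 2 = RCLike.re ⟪φ, dyad ψ ψ φ⟫_ℂ := hd.symm
      _ ≤ RCLike.re ⟪φ, TP.map 1 σ φ⟫_ℂ := hposle
      _ = ∑ k ∈ F, ‖s (b k)‖ ^ 2 := hm
      _ ≤ ∑' i, ‖s (f i)‖ ^ 2 := diag_sum_le_trace_aux f s hssa htc' b hb F
      _ = trAlong f σ := htr.symm
  apply hnsum
  refine summable_of_sum_le (c := Real.sqrt (trAlong f σ)) hr fun F => ?_
  exact Real.le_sqrt_of_sq_le (key F)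


end
end

section
/- Let ρ_n = (1 − 1/n)|0⟩⟨0| + (1/n²) Σ_{k=1}^{n} |k⟩⟨k| for an orthonormal sequence {|k⟩}_{k≥0} in a separable Hilbert space. Then ρ_n converges in trace norm to |0⟩⟨0|, while H_max(ρ_n) = 2 log tr√ρ_n converges to 2 as n → ∞, whereas H_max(|0⟩⟨0|) = 0. Hence the max-entropy ρ ↦ 2 log tr√ρ is not trace-norm continuous on density operators. -/
open scoped InnerProductSpace ComplexOrder
open ContinuousLinearMap Filter Topology

set_option synthInstance.maxHeartbeats 1000000
set_option maxHeartbeats 1600000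

noncomputable section AuxMaxEnt
set_option linter.unusedSectionVars false

variable {H : Type*} [NormedAddCommGroup H] [InnerProductSpace ℂ H]

lemma dyad_apply (x y z : H) : dyad x y z = ⟪y, z⟫_ℂ • x := rfl

lemma dyad_mul_dyad (x y z w : H) : dyad x y * dyad z w = ⟪y, z⟫_ℂ • dyad x w := by
  ext u
  simp [dyad_apply, mul_apply, smul_smul, mul_comm]

lemma isSelfAdjoint_dyad (x : H) [CompleteSpace H] : IsSelfAdjoint (dyad x x) := by
  rw [isSelfAdjoint_iff, star_eq_adjoint]
  exact ((ContinuousLinearMap.eq_adjoint_iff (dyad x x) (dyad x x)).mpr fun u w => by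
    simp [dyad_apply, inner_smul_left, inner_smul_right, mul_comm]).symm

lemma dyad_nonneg (x : H) [CompleteSpace H] : 0 ≤ dyad x x := by
  rw [ContinuousLinearMap.nonneg_iff_isPositive]
  refine ⟨ContinuousLinearMap.isSelfAdjoint_iff_isSymmetric.mp (isSelfAdjoint_dyad x), fun u => ?_⟩
  simp only [ContinuousLinearMap.reApplyInnerSelf_apply, dyad_apply, inner_smul_left]
  rw [← Complex.normSq_eq_conj_mul_self]
  simpa using Complex.normSq_nonneg ⟪x, u⟫_ℂ


lemma dyad_real_smul (c : ℝ) (x : H) (hc : 0 ≤ c) :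
    c • dyad x x = dyad (Real.sqrt c • x) (Real.sqrt c • x) := by
  have hr : (Real.sqrt c : ℝ) • x = ((Real.sqrt c : ℂ)) • x := RCLike.real_smul_eq_coe_smul _ _
  ext u
  rw [ContinuousLinearMap.smul_apply, dyad_apply, dyad_apply, hr, inner_smul_left,
    Complex.conj_ofReal, RCLike.real_smul_eq_coe_smul (K := ℂ) c, smul_smul, smul_smul]
  congr 1
  have h2 : ((Real.sqrt c : ℂ)) * ⟪x, u⟫_ℂ * (Real.sqrt c : ℂ)
      = (((Real.sqrt c * Real.sqrt c : ℝ) : ℂ)) * ⟪x, u⟫_ℂ := by push_cast; ring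
  rw [h2, Real.mul_self_sqrt hc]
  rfl

lemma smul_dyad_nonneg (c : ℝ) (x : H) (hc : 0 ≤ c) [CompleteSpace H] :
    0 ≤ c • dyad x x := by
  rw [dyad_real_smul c x hc]; exact dyad_nonneg _

lemma sum_smul_dyad_nonneg [CompleteSpace H] (s : Finset ℕ) (c : ℕ → ℝ) (w : ℕ → H)
    (hc : ∀ k, 0 ≤ c k) : 0 ≤ ∑ k ∈ s, c k • dyad (w k) (w k) :=
  Finset.sum_nonneg fun k _ => smul_dyad_nonneg (c k) (w k) (hc k)

lemma sum_smul_dyad_mul (s : Finset ℕ) (c d : ℕ → ℝ) (w : ℕ → H) (hw : Orthonormal ℂ w) :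
    (∑ k ∈ s, c k • dyad (w k) (w k)) * (∑ k ∈ s, d k • dyad (w k) (w k))
      = ∑ k ∈ s, (c k * d k) • dyad (w k) (w k) := by
  rw [Finset.sum_mul_sum]
  have hite := orthonormal_iff_ite.mp hw
  refine Finset.sum_congr rfl fun i hi => ?_
  rw [Finset.sum_eq_single i]
  · rw [smul_mul_assoc, mul_smul_comm, dyad_mul_dyad, hite, if_pos rfl, one_smul, smul_smul]
  · intro j hj hne
    rw [smul_mul_assoc, mul_smul_comm, dyad_mul_dyad, hite, if_neg (Ne.symm hne),
      zero_smul, smul_zero, smul_zero]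
  · intro h; exact absurd hi h

lemma trAlong_sum_smul_dyad {ι : Type*} [CompleteSpace H] (e : HilbertBasis ι ℂ H)
    (s : Finset ℕ) (c : ℕ → ℝ) (w : ℕ → H) (hw : Orthonormal ℂ w) :
    trAlong e (∑ k ∈ s, c k • dyad (w k) (w k)) = ∑ k ∈ s, c k := by
  have hdiag : ∀ i : ι, ⟪e i, (∑ k ∈ s, c k • dyad (w k) (w k)) (e i)⟫_ℂ
      = ∑ k ∈ s, (c k : ℂ) * (⟪w k, e i⟫_ℂ * ⟪e i, w k⟫_ℂ) := by
    intro i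
    rw [ContinuousLinearMap.sum_apply, inner_sum]
    refine Finset.sum_congr rfl fun k _ => ?_
    rw [ContinuousLinearMap.smul_apply, show (c k : ℝ) • dyad (w k) (w k) (e i)
        = ((c k : ℂ)) • dyad (w k) (w k) (e i) from RCLike.real_smul_eq_coe_smul (c k) _,
      inner_smul_right, dyad_apply, inner_smul_right]
  have hsumk : ∀ k ∈ s, Summable fun i : ι => (c k : ℂ) * (⟪w k, e i⟫_ℂ * ⟪e i, w k⟫_ℂ) :=
    fun k _ => (e.summable_inner_mul_inner (w k) (w k)).mul_left _
  have hsum : Summable fun i : ι => ⟪e i, (∑ k ∈ s, c k • dyad (w k) (w k)) (e i)⟫_ℂ :=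
    (summable_sum hsumk).congr fun i => (hdiag i).symm
  have hval : ∀ k ∈ s, ∑' i : ι, (c k : ℂ) * (⟪w k, e i⟫_ℂ * ⟪e i, w k⟫_ℂ) = (c k : ℂ) := by
    intro k _
    rw [tsum_mul_left, e.tsum_inner_mul_inner (w k) (w k), orthonormal_iff_ite.mp hw, if_pos rfl,
      mul_one]
  have h1 : trAlong e (∑ k ∈ s, c k • dyad (w k) (w k))
      = RCLike.re (∑' i : ι, ⟪e i, (∑ k ∈ s, c k • dyad (w k) (w k)) (e i)⟫_ℂ) :=
    (RCLike.re_tsum _ hsum).symm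
  rw [h1, tsum_congr hdiag, Summable.tsum_finsetSum hsumk, Finset.sum_congr rfl hval, map_sum]
  simp

lemma isSelfAdjoint_sum_smul_dyad [CompleteSpace H] (s : Finset ℕ) (c : ℕ → ℝ) (w : ℕ → H) :
    IsSelfAdjoint (∑ k ∈ s, c k • dyad (w k) (w k)) := by
  rw [isSelfAdjoint_iff, star_eq_adjoint]
  refine ((ContinuousLinearMap.eq_adjoint_iff _ _).mpr fun u z => ?_).symm
  simp only [ContinuousLinearMap.sum_apply, sum_inner, inner_sum,
    ContinuousLinearMap.smul_apply, dyad_apply]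
  refine Finset.sum_congr rfl fun k _ => ?_
  rw [show (c k) • (⟪w k, u⟫_ℂ • w k) = ((c k : ℂ)) • (⟪w k, u⟫_ℂ • w k) from
      RCLike.real_smul_eq_coe_smul _ _,
    show (c k) • (⟪w k, z⟫_ℂ • w k) = ((c k : ℂ)) • (⟪w k, z⟫_ℂ • w k) from
      RCLike.real_smul_eq_coe_smul _ _,
    inner_smul_left, inner_smul_right, inner_smul_left, inner_smul_right,
    Complex.conj_ofReal, ← inner_conj_symm u (w k)]
  ring

section Combo
variable [CompleteSpace H] (v : ℕ → H)

omit [CompleteSpace H] in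
lemma combo_eq (n : ℕ) (a b : ℝ) :
    ∑ k ∈ insert 0 (Finset.Icc 1 n), (if k = 0 then a else b) • dyad (v k) (v k)
      = a • dyad (v 0) (v 0) + b • ∑ k ∈ Finset.Icc 1 n, dyad (v k) (v k) := by
  rw [Finset.sum_insert (by simp), if_pos rfl, Finset.smul_sum]
  congr 1
  exact Finset.sum_congr rfl fun k hk => by
    rw [if_neg (by rcases Finset.mem_Icc.mp hk with ⟨h1, _⟩; omega)]

variable (hv : Orthonormal ℂ v)
include hv

lemma combo_mul (n : ℕ) (a b c d : ℝ) :
    (a • dyad (v 0) (v 0) + b • ∑ k ∈ Finset.Icc 1 n, dyad (v k) (v k))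
      * (c • dyad (v 0) (v 0) + d • ∑ k ∈ Finset.Icc 1 n, dyad (v k) (v k))
      = (a * c) • dyad (v 0) (v 0)
        + (b * d) • ∑ k ∈ Finset.Icc 1 n, dyad (v k) (v k) := by
  rw [← combo_eq v n a b, ← combo_eq v n c d, ← combo_eq v n (a*c) (b*d),
    sum_smul_dyad_mul _ _ _ v hv]
  exact Finset.sum_congr rfl fun k _ => by by_cases h : k = 0 <;> simp [h]

omit hv in
lemma combo_nonneg (n : ℕ) (a b : ℝ) (ha : 0 ≤ a) (hb : 0 ≤ b) :
    0 ≤ a • dyad (v 0) (v 0) + b • ∑ k ∈ Finset.Icc 1 n, dyad (v k) (v k) := by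
  rw [← combo_eq v n a b]
  exact sum_smul_dyad_nonneg _ _ v fun k => by by_cases h : k = 0 <;> simp [h, ha, hb]

omit hv in
lemma combo_selfAdjoint (n : ℕ) (a b : ℝ) :
    IsSelfAdjoint (a • dyad (v 0) (v 0)
      + b • ∑ k ∈ Finset.Icc 1 n, dyad (v k) (v k)) := by
  rw [← combo_eq v n a b]
  exact isSelfAdjoint_sum_smul_dyad _ _ _

lemma combo_sqrt (n : ℕ) (a b : ℝ) (ha : 0 ≤ a) (hb : 0 ≤ b) :
    CFC.sqrt ((a * a) • dyad (v 0) (v 0)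
      + (b * b) • ∑ k ∈ Finset.Icc 1 n, dyad (v k) (v k))
      = a • dyad (v 0) (v 0) + b • ∑ k ∈ Finset.Icc 1 n, dyad (v k) (v k) := by
  rw [← combo_mul v hv n a b a b, ← sq, CFC.sqrt_sq _ (combo_nonneg v n a b ha hb)]

lemma combo_tr {ι : Type*} (e : HilbertBasis ι ℂ H) (n : ℕ) (a b : ℝ) :
    trAlong e (a • dyad (v 0) (v 0) + b • ∑ k ∈ Finset.Icc 1 n, dyad (v k) (v k))
      = a + n * b := by
  rw [← combo_eq v n a b, trAlong_sum_smul_dyad e _ _ v hv,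
    Finset.sum_insert (by simp), if_pos rfl]
  congr 1
  rw [Finset.sum_congr rfl (fun k hk => if_neg (by rcases Finset.mem_Icc.mp hk with ⟨h1,_⟩; omega)),
    Finset.sum_const, Nat.card_Icc]
  simp [nsmul_eq_mul]

end Combo

end AuxMaxEnt


noncomputable section

/-- The states `ρ_n = (1-1/n)|0⟩⟨0| + n⁻² Σ_{k=1}^n |k⟩⟨k|` converge in
trace norm to `|0⟩⟨0|`, yet `H_max(ρ_n) = 2 log₂ tr √ρ_n → 2` while
`H_max(|0⟩⟨0|) = 0`; hence `H_max` is not trace-norm continuous. -/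
theorem max_entropy_not_continuous
    {H : Type*} [NormedAddCommGroup H] [InnerProductSpace ℂ H] [CompleteSpace H]
    [TopologicalSpace.SeparableSpace H] {ι : Type*} (e : HilbertBasis ι ℂ H)
    (v : ℕ → H) (hv : Orthonormal ℂ v)
    (ρ : ℕ → H →L[ℂ] H)
    (hρ : ∀ n, ρ n = ((1 : ℝ) - 1 / n) • dyad (v 0) (v 0)
        + ((1 : ℝ) / (n : ℝ) ^ 2) • ∑ k ∈ Finset.Icc 1 n, dyad (v k) (v k)) :
    Tendsto (fun n => trNormAlong e (ρ n - dyad (v 0) (v 0))) atTop (nhds 0) ∧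
    Tendsto (fun n => 2 * Real.logb 2 (trAlong e (CFC.sqrt (ρ n)))) atTop (nhds 2) ∧
    2 * Real.logb 2 (trAlong e (CFC.sqrt (dyad (v 0) (v 0)))) = 0 ∧
    ¬ Tendsto (fun n => 2 * Real.logb 2 (trAlong e (CFC.sqrt (ρ n)))) atTop
        (nhds (2 * Real.logb 2 (trAlong e (CFC.sqrt (dyad (v 0) (v 0)))))) := by
  have key1 : ∀ n : ℕ, 1 ≤ n → trNormAlong e (ρ n - dyad (v 0) (v 0)) = 2 / n := by
    intro n hn
    have hn0 : (n:ℝ) ≠ 0 := Nat.cast_ne_zero.mpr (by omega)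
    have hdiff : ρ n - dyad (v 0) (v 0)
        = (-(1/(n:ℝ))) • dyad (v 0) (v 0)
          + ((1:ℝ)/(n:ℝ)^2) • ∑ k ∈ Finset.Icc 1 n, dyad (v k) (v k) := by
      rw [hρ n, add_sub_right_comm]
      congr 1
      nth_rewrite 2 [← one_smul ℝ (dyad (v 0) (v 0))]
      rw [← sub_smul]
      congr 1
      ring
    have hsa := combo_selfAdjoint v n (-(1/(n:ℝ))) ((1:ℝ)/(n:ℝ)^2)
    have habs : absOp (ρ n - dyad (v 0) (v 0)) = (1/(n:ℝ)) • dyad (v 0) (v 0)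
        + ((1:ℝ)/(n:ℝ)^2) • ∑ k ∈ Finset.Icc 1 n, dyad (v k) (v k) := by
      unfold absOp
      rw [hdiff, ← star_eq_adjoint, hsa.star_eq, combo_mul v hv n _ _ _ _,
        show (-(1/(n:ℝ))) * (-(1/(n:ℝ))) = (1/(n:ℝ)) * (1/(n:ℝ)) by ring]
      exact combo_sqrt v hv n _ _ (by positivity) (by positivity)
    unfold trNormAlong
    rw [habs, combo_tr v hv e n _ _]
    field_simp
    ring
  have lim1 : Tendsto (fun n => trNormAlong e (ρ n - dyad (v 0) (v 0))) atTop (nhds 0) := by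
    have h2n : Tendsto (fun n : ℕ => 2 / (n:ℝ)) atTop (nhds 0) :=
      tendsto_const_div_atTop_nhds_zero_nat 2
    exact h2n.congr' (eventually_atTop.mpr ⟨1, fun n hn => (key1 n hn).symm⟩)
  have key2 : ∀ n : ℕ, 1 ≤ n →
      trAlong e (CFC.sqrt (ρ n)) = Real.sqrt (1 - 1/(n:ℝ)) + 1 := by
    intro n hn
    have hn0 : (n:ℝ) ≠ 0 := Nat.cast_ne_zero.mpr (by omega)
    have h1n : (0:ℝ) ≤ 1 - 1/(n:ℝ) := by
      have h1 : (1:ℝ) ≤ (n:ℝ) := by exact_mod_cast hn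
      have : (1:ℝ)/(n:ℝ) ≤ 1 := by rw [div_le_one (by linarith)]; exact h1
      linarith
    have hρ' : ρ n = (Real.sqrt (1 - 1/(n:ℝ)) * Real.sqrt (1 - 1/(n:ℝ))) • dyad (v 0) (v 0)
        + ((1/(n:ℝ)) * (1/(n:ℝ))) • ∑ k ∈ Finset.Icc 1 n, dyad (v k) (v k) := by
      rw [hρ n, Real.mul_self_sqrt h1n]
      congr 2
      rw [div_mul_div_comm, one_mul, ← sq]
    rw [hρ', combo_sqrt v hv n _ _ (Real.sqrt_nonneg _) (by positivity),
      combo_tr v hv e n _ _, mul_one_div, div_self hn0]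
  have lim2val : Tendsto (fun n : ℕ => Real.sqrt (1 - 1/(n:ℝ)) + 1) atTop (nhds 2) := by
    have h0 : Tendsto (fun n : ℕ => 1 - 1/(n:ℝ)) atTop (nhds 1) := by
      simpa using (tendsto_const_nhds (x := (1:ℝ))).sub tendsto_one_div_atTop_nhds_zero_nat
    have h1 : Tendsto (fun n : ℕ => Real.sqrt (1 - 1/(n:ℝ))) atTop (nhds 1) := by
      have := (Real.continuous_sqrt.tendsto 1).comp h0
      simpa [Function.comp_def] using this
    have hsum := h1.add (tendsto_const_nhds (x := (1:ℝ)) (f := atTop))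
    rw [show (1:ℝ) + 1 = 2 by norm_num] at hsum
    exact hsum
  have hlogb : ContinuousAt (fun x : ℝ => 2 * Real.logb 2 x) 2 := by
    have hlog : ContinuousAt Real.log 2 := Real.continuousAt_log (by norm_num)
    have h1 : ContinuousAt (fun x : ℝ => Real.logb 2 x) 2 := by
      simp only [Real.logb]
      exact hlog.div_const _
    exact continuousAt_const.mul h1
  have lim2 : Tendsto (fun n => 2 * Real.logb 2 (trAlong e (CFC.sqrt (ρ n)))) atTop (nhds 2) := by
    have hcomp := (hlogb.tendsto).comp lim2val
    have h22 : 2 * Real.logb 2 2 = 2 := by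
      rw [Real.logb_self_eq_one] <;> norm_num
    rw [h22] at hcomp
    exact hcomp.congr' (eventually_atTop.mpr ⟨1, fun n hn => by
      simp only [Function.comp_apply, key2 n hn]⟩)
  have key3 : trAlong e (CFC.sqrt (dyad (v 0) (v 0))) = 1 := by
    have h : dyad (v 0) (v 0) = ((1:ℝ)*(1:ℝ)) • dyad (v 0) (v 0)
        + ((0:ℝ)*(0:ℝ)) • ∑ k ∈ Finset.Icc 1 0, dyad (v k) (v k) := by simp
    rw [h, combo_sqrt v hv 0 1 0 zero_le_one le_rfl, combo_tr v hv e 0 1 0]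
    simp
  have part3 : 2 * Real.logb 2 (trAlong e (CFC.sqrt (dyad (v 0) (v 0)))) = 0 := by
    rw [key3, Real.logb_one, mul_zero]
  refine ⟨lim1, lim2, part3, fun hcon => ?_⟩
  rw [part3] at hcon
  have := tendsto_nhds_unique lim2 hcon
  norm_num at this


end
end

section
/- Data processing inequality for min-entropy: for any positive trace-class operator ρ_ABC on H_A ⊗ H_B ⊗ H_C (separable Hilbert spaces), Λ(ρ_AB|B) ≤ Λ(ρ_ABC|BC), where Λ(ρ_XY|Y) := inf{ tr σ̃_Y : σ̃_Y positive trace class, id_X ⊗ σ̃_Y ≥ ρ_XY } and ρ_AB = tr_C ρ_ABC. Equivalently H_min(ρ_ABC|BC) ≤ H_min(ρ_AB|B). -/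
open scoped InnerProductSpace ComplexOrder
open ContinuousLinearMap Filter Topology

set_option synthInstance.maxHeartbeats 1000000
set_option maxHeartbeats 1600000

noncomputable section
namespace MEDP

section Base
variable {H : Type*} [NormedAddCommGroup H] [InnerProductSpace ℂ H] [CompleteSpace H]

lemma isSelfAdjoint_sqrt {σ : H →L[ℂ] H} (hσ : σ.IsPositive) : IsSelfAdjoint (CFC.sqrt σ) := by
  have h : (0:H →L[ℂ] H) ≤ CFC.sqrt σ := CFC.sqrt_nonneg (a:=σ)
  exact ((ContinuousLinearMap.nonneg_iff_isPositive _).mp h).isSelfAdjoint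

lemma inner_sqrt_sqrt {σ : H →L[ℂ] H} (hσ : σ.IsPositive) (x y : H) :
    ⟪x, σ y⟫_ℂ = ⟪CFC.sqrt σ x, CFC.sqrt σ y⟫_ℂ := by
  have h0 : (0:H →L[ℂ] H) ≤ σ := (ContinuousLinearMap.nonneg_iff_isPositive _).mpr hσ
  have hm : CFC.sqrt σ * CFC.sqrt σ = σ := CFC.sqrt_mul_sqrt_self σ h0
  have hsym := (ContinuousLinearMap.isSelfAdjoint_iff_isSymmetric.mp (isSelfAdjoint_sqrt hσ))
  conv_lhs => rw [← hm]
  rw [ContinuousLinearMap.mul_apply]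
  exact (hsym x (CFC.sqrt σ y)).symm

lemma absOp_of_positive {σ : H →L[ℂ] H} (hσ : σ.IsPositive) : absOp σ = σ := by
  have h0 : (0:H →L[ℂ] H) ≤ σ := (ContinuousLinearMap.nonneg_iff_isPositive _).mpr hσ
  have ha : ContinuousLinearMap.adjoint σ = σ := by
    rw [← ContinuousLinearMap.star_eq_adjoint]; exact hσ.isSelfAdjoint
  rw [absOp, ha, ← sq, CFC.sqrt_sq σ h0]


lemma hasSum_parseval {ι : Type*} (e : HilbertBasis ι ℂ H) (x : H) :
    HasSum (fun k => ‖⟪e k, x⟫_ℂ‖ ^ 2) (‖x‖ ^ 2) := by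
  have h := e.hasSum_inner_mul_inner x x
  have h2 : HasSum (fun k => (⟪x, e k⟫_ℂ * ⟪e k, x⟫_ℂ).re) ((⟪x, x⟫_ℂ).re) :=
    h.mapL Complex.reCLM
  have h3 : (fun k => (⟪x, e k⟫_ℂ * ⟪e k, x⟫_ℂ).re) = fun k => ‖⟪e k, x⟫_ℂ‖ ^ 2 := by
    funext k
    rw [← inner_conj_symm x (e k), Complex.conj_mul']
    norm_cast
  have h4 : (⟪x, x⟫_ℂ).re = ‖x‖ ^ 2 := inner_self_eq_norm_sq (𝕜 := ℂ) x
  rwa [h3, h4] at h2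

lemma EN_parseval {ι : Type*} (e : HilbertBasis ι ℂ H) (x : H) :
    ∑' k, ENNReal.ofReal (‖⟪e k, x⟫_ℂ‖ ^ 2) = ENNReal.ofReal (‖x‖ ^ 2) := by
  rw [← ENNReal.ofReal_tsum_of_nonneg (fun k => by positivity) (hasSum_parseval e x).summable,
    (hasSum_parseval e x).tsum_eq]

lemma summable_of_EN {ι : Type*} {f : ι → ℝ} (h0 : ∀ i, 0 ≤ f i)
    (h : ∑' i, ENNReal.ofReal (f i) ≠ ⊤) : Summable f := by
  have := ENNReal.summable_toReal h
  simpa [ENNReal.toReal_ofReal (h0 _)] using this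

lemma lemA {ι κ : Type*} (e : HilbertBasis ι ℂ H) {S : H →L[ℂ] H} (hS : IsSelfAdjoint S)
    {v : κ → H} (hv : Orthonormal ℂ v) :
    ∑' j, ENNReal.ofReal (‖S (v j)‖ ^ 2) ≤ ∑' k, ENNReal.ofReal (‖S (e k)‖ ^ 2) := by
  have hsym := ContinuousLinearMap.isSelfAdjoint_iff_isSymmetric.mp hS
  calc ∑' j, ENNReal.ofReal (‖S (v j)‖ ^ 2)
      = ∑' j, ∑' k, ENNReal.ofReal (‖⟪e k, S (v j)⟫_ℂ‖ ^ 2) := by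
        simp_rw [EN_parseval]
    _ = ∑' k, ∑' j, ENNReal.ofReal (‖⟪e k, S (v j)⟫_ℂ‖ ^ 2) := ENNReal.tsum_comm
    _ ≤ ∑' k, ENNReal.ofReal (‖S (e k)‖ ^ 2) := by
        refine ENNReal.tsum_le_tsum fun k => ?_
        have h1 : ∀ j, ⟪e k, S (v j)⟫_ℂ = ⟪S (e k), v j⟫_ℂ := fun j => (hsym (e k) (v j)).symm
        have hb : ∑' j, ‖⟪v j, S (e k)⟫_ℂ‖ ^ 2 ≤ ‖S (e k)‖ ^ 2 :=
          hv.tsum_inner_products_le (S (e k))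
        have hsumm : Summable fun j => ‖⟪v j, S (e k)⟫_ℂ‖ ^ 2 :=
          hv.inner_products_summable (S (e k))
        calc ∑' j, ENNReal.ofReal (‖⟪e k, S (v j)⟫_ℂ‖ ^ 2)
            = ∑' j, ENNReal.ofReal (‖⟪v j, S (e k)⟫_ℂ‖ ^ 2) := by
              congr 1; funext j; rw [h1 j, ← norm_inner_symm]
          _ = ENNReal.ofReal (∑' j, ‖⟪v j, S (e k)⟫_ℂ‖ ^ 2) :=
              (ENNReal.ofReal_tsum_of_nonneg (fun j => by positivity) hsumm).symm
          _ ≤ ENNReal.ofReal (‖S (e k)‖ ^ 2) := ENNReal.ofReal_le_ofReal hb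

lemma lemA' {ι κ : Type*} (e : HilbertBasis ι ℂ H) {S : H →L[ℂ] H} (hS : IsSelfAdjoint S)
    {v : κ → H} {r : ℝ}
    (hv1 : ∀ i, ⟪v i, v i⟫_ℂ = (r : ℂ))
    (hv2 : ∀ i j, i ≠ j → ⟪v i, v j⟫_ℂ = 0) :
    ∑' j, ENNReal.ofReal (‖S (v j)‖ ^ 2)
      ≤ ENNReal.ofReal r * ∑' k, ENNReal.ofReal (‖S (e k)‖ ^ 2) := by
  classical
  have hnr : ∀ j, ‖v j‖ ^ 2 = r := by
    intro j
    have : ((‖v j‖^2 : ℝ) : ℂ) = (r : ℂ) := by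
      rw [← hv1 j]
      exact (by exact_mod_cast inner_self_eq_norm_sq_to_K (𝕜 := ℂ) (v j) : ⟪v j, v j⟫_ℂ = ((‖v j‖^2 : ℝ) : ℂ)).symm ▸ rfl
    exact_mod_cast this
  rcases le_or_gt r 0 with hr | hr
  · have hz : ∀ j, v j = 0 := fun j => by
      have h1 : ‖v j‖ ^ 2 = r := hnr j
      have : ‖v j‖ = 0 := by nlinarith [norm_nonneg (v j)]
      exact norm_eq_zero.mp this
    simp [hz]
  · set t := Real.sqrt r with ht
    have htpos : 0 < t := Real.sqrt_pos.mpr hr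
    have ht2 : t ^ 2 = r := Real.sq_sqrt hr.le
    set w : κ → H := fun j => ((t⁻¹ : ℝ) : ℂ) • v j with hw
    have hortho : Orthonormal ℂ w := by
      rw [orthonormal_iff_ite]
      intro i j
      simp only [hw, inner_smul_left, inner_smul_right, Complex.conj_ofReal]
      rcases eq_or_ne i j with rfl | hne
      · rw [hv1 i, if_pos rfl]
        push_cast
        rw [show ((t:ℂ)⁻¹ * ((t:ℂ)⁻¹ * r)) = (r / t^2 : ℂ) by ring]
        norm_cast
        rw [ht2, div_self hr.ne']
      · rw [hv2 i j hne, if_neg hne]; ring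
    have hvw : ∀ j, v j = ((t : ℝ) : ℂ) • w j := by
      intro j
      rw [hw]
      simp only [smul_smul]
      norm_cast
      rw [mul_inv_cancel₀ htpos.ne']
      simp
    calc ∑' j, ENNReal.ofReal (‖S (v j)‖ ^ 2)
        = ∑' j, ENNReal.ofReal r * ENNReal.ofReal (‖S (w j)‖ ^ 2) := by
          congr 1; funext j
          rw [hvw j, map_smul, norm_smul, ← ENNReal.ofReal_mul (by positivity)]
          congr 1
          simp only [Complex.norm_real, mul_pow]
          rw [Real.norm_of_nonneg htpos.le, ht2]
      _ = ENNReal.ofReal r * ∑' j, ENNReal.ofReal (‖S (w j)‖ ^ 2) := ENNReal.tsum_mul_left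
      _ ≤ ENNReal.ofReal r * ∑' k, ENNReal.ofReal (‖S (e k)‖ ^ 2) :=
          mul_le_mul_right (lemA e hS hortho) _


lemma complex_tsum_nonneg {ι : Type*} {f : ι → ℂ} (h : ∀ i, 0 ≤ f i) :
    0 ≤ ∑' i, f i := by
  by_cases hs : Summable f
  · have hre : ∀ i, f i = (((f i).re : ℝ) : ℂ) := by
      intro i
      have := h i
      rw [Complex.le_def] at this
      exact (Complex.re_add_im (f i)) ▸ by
        rw [← this.2]; simp [Complex.ext_iff]
    have h2 : ∑' i, f i = ((∑' i, (f i).re : ℝ) : ℂ) := by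
      rw [Complex.ofReal_tsum]
      exact tsum_congr fun i => hre i
    rw [h2]
    rw [Complex.zero_le_real]
    exact tsum_nonneg fun i => by
      have := h i; rw [Complex.le_def] at this; simpa using this.1
  · rw [tsum_eq_zero_of_not_summable hs]

lemma conj_of_nonneg {c : ℂ} (h : 0 ≤ c) : (starRingEnd ℂ) c = c := by
  rw [Complex.le_def] at h
  simp [Complex.ext_iff, ← h.2]


lemma isPositive_of_inner_nonneg {T : H →L[ℂ] H} (h : ∀ x, 0 ≤ ⟪x, T x⟫_ℂ) :
    T.IsPositive := by
  rw [ContinuousLinearMap.isPositive_iff_complex]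
  intro x
  have hc : (starRingEnd ℂ) ⟪x, T x⟫_ℂ = ⟪T x, x⟫_ℂ := inner_conj_symm _ _
  have h1 : ⟪T x, x⟫_ℂ = ⟪x, T x⟫_ℂ := by rw [← hc, conj_of_nonneg (h x)]
  have h2 := h x
  rw [Complex.le_def] at h2
  constructor
  · rw [h1]
    simp [Complex.ext_iff, ← h2.2]
  · rw [h1]; simpa using h2.1

lemma inner_nonneg_of_isPositive {T : H →L[ℂ] H} (h : T.IsPositive) (x : H) :
    0 ≤ ⟪x, T x⟫_ℂ := by
  obtain ⟨h1, h2⟩ := (ContinuousLinearMap.isPositive_iff_complex T).mp h x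
  have hnn : 0 ≤ ⟪T x, x⟫_ℂ := by rw [← h1]; exact Complex.zero_le_real.mpr h2
  have hc : (starRingEnd ℂ) ⟪T x, x⟫_ℂ = ⟪x, T x⟫_ℂ := inner_conj_symm _ _
  rw [← hc, conj_of_nonneg hnn]
  exact hnn


-- new material
lemma diag_sq {σ : H →L[ℂ] H} (hσ : σ.IsPositive) (x : H) :
    RCLike.re ⟪x, σ x⟫_ℂ = ‖CFC.sqrt σ x‖ ^ 2 := by
  rw [inner_sqrt_sqrt hσ]
  exact inner_self_eq_norm_sq (𝕜 := ℂ) _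

lemma traceClass_iff_summable {ι : Type*} (e : HilbertBasis ι ℂ H) {σ : H →L[ℂ] H}
    (hσ : σ.IsPositive) :
    IsTraceClass e σ ↔ Summable fun k => ‖CFC.sqrt σ (e k)‖ ^ 2 := by
  unfold IsTraceClass
  rw [absOp_of_positive hσ]
  exact summable_congr fun k => diag_sq hσ (e k)

lemma trace_EN {ι : Type*} (e : HilbertBasis ι ℂ H) {σ : H →L[ℂ] H}
    (hσ : σ.IsPositive) (htc : IsTraceClass e σ) :
    ∑' k, ENNReal.ofReal (‖CFC.sqrt σ (e k)‖ ^ 2) = ENNReal.ofReal (trAlong e σ) := by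
  have hs := (traceClass_iff_summable e hσ).mp htc
  rw [← ENNReal.ofReal_tsum_of_nonneg (fun k => by positivity) hs]
  congr 1
  exact (tsum_congr fun k => (diag_sq hσ (e k))).symm

lemma trAlong_nonneg {ι : Type*} (e : HilbertBasis ι ℂ H) {σ : H →L[ℂ] H}
    (hσ : σ.IsPositive) : 0 ≤ trAlong e σ :=
  tsum_nonneg fun k => hσ.re_inner_nonneg_right (e k)

/-- Cauchy–Schwarz for tsums of nonneg reals. -/
lemma tsum_CS {ι : Type*} {a b : ι → ℝ} (ha0 : ∀ i, 0 ≤ a i) (hb0 : ∀ i, 0 ≤ b i)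
    (ha : Summable fun i => a i ^ 2) (hb : Summable fun i => b i ^ 2) :
    Summable (fun i => a i * b i) ∧
      ∑' i, a i * b i ≤ Real.sqrt (∑' i, a i ^ 2) * Real.sqrt (∑' i, b i ^ 2) := by
  have hsum : Summable fun i => a i * b i := by
    refine Summable.of_nonneg_of_le (fun i => mul_nonneg (ha0 i) (hb0 i))
      (fun i => ?_) ((ha.add hb).div_const 2)
    show a i * b i ≤ (a i ^ 2 + b i ^ 2) / 2
    nlinarith [sq_nonneg (a i - b i)]
  refine ⟨hsum, Summable.tsum_le_of_sum_le hsum fun s => ?_⟩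
  calc ∑ i ∈ s, a i * b i
      ≤ Real.sqrt (∑ i ∈ s, a i ^ 2) * Real.sqrt (∑ i ∈ s, b i ^ 2) :=
        Real.sum_mul_le_sqrt_mul_sqrt s a b
    _ ≤ Real.sqrt (∑' i, a i ^ 2) * Real.sqrt (∑' i, b i ^ 2) := by
        gcongr <;> first
          | exact Summable.sum_le_tsum s (fun i _ => by positivity) ‹_›


end Base

section PT
variable {HB HC HBC : Type*}
  [NormedAddCommGroup HB] [InnerProductSpace ℂ HB] [CompleteSpace HB]
  [NormedAddCommGroup HC] [InnerProductSpace ℂ HC]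
  [NormedAddCommGroup HBC] [InnerProductSpace ℂ HBC] [CompleteSpace HBC]

theorem exists_ptrace (TP : HilbertTensor HB HC HBC) {ιC : Type*} (c : HilbertBasis ιC ℂ HC)
    {ιBC : Type*} (eBC : HilbertBasis ιBC ℂ HBC) {σ : HBC →L[ℂ] HBC}
    (hσ : σ.IsPositive) (htc : IsTraceClass eBC σ) {ιB : Type*} (eB : HilbertBasis ιB ℂ HB) :
    ∃ τ : HB →L[ℂ] HB, τ.IsPositive ∧ IsTraceClass eB τ ∧ trAlong eB τ ≤ trAlong eBC σ ∧
      (∀ u w : HB, Summable fun i => ⟪TP.tmul u (c i), σ (TP.tmul w (c i))⟫_ℂ) ∧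
      (∀ u w : HB, ⟪u, τ w⟫_ℂ = ∑' i, ⟪TP.tmul u (c i), σ (TP.tmul w (c i))⟫_ℂ) := by
  classical
  set S := CFC.sqrt σ with hSdef
  have hSsa := isSelfAdjoint_sqrt hσ
  set M := ∑' k, ENNReal.ofReal (‖S (eBC k)‖ ^ 2) with hMdef
  have hM : M = ENNReal.ofReal (trAlong eBC σ) := trace_EN eBC hσ htc
  have hMne : M ≠ ⊤ := by rw [hM]; exact ENNReal.ofReal_ne_top
  set K := trAlong eBC σ with hKdef
  have hK0 : 0 ≤ K := trAlong_nonneg eBC hσ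
  have hcorth := orthonormal_iff_ite.mp c.orthonormal
  -- column vectors
  have hv1 : ∀ (u : HB) (i : ιC),
      ⟪TP.tmul u (c i), TP.tmul u (c i)⟫_ℂ = ((‖u‖ ^ 2 : ℝ) : ℂ) := by
    intro u i
    rw [TP.inner_tmul, hcorth i i, if_pos rfl, mul_one]
    exact_mod_cast inner_self_eq_norm_sq_to_K (𝕜 := ℂ) u
  have hv2 : ∀ (u : HB) (i i' : ιC), i ≠ i' →
      ⟪TP.tmul u (c i), TP.tmul u (c i')⟫_ℂ = 0 := by
    intro u i i' hne
    rw [TP.inner_tmul, hcorth i i', if_neg hne, mul_zero]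
  have hbound : ∀ u : HB,
      ∑' i, ENNReal.ofReal (‖S (TP.tmul u (c i))‖ ^ 2) ≤ ENNReal.ofReal (‖u‖ ^ 2) * M :=
    fun u => lemA' eBC hSsa (hv1 u) (hv2 u)
  have hsq : ∀ u : HB, Summable fun i => ‖S (TP.tmul u (c i))‖ ^ 2 := by
    intro u
    refine summable_of_EN (fun i => by positivity) (ne_top_of_le_ne_top ?_ (hbound u))
    exact ENNReal.mul_ne_top ENNReal.ofReal_ne_top hMne
  have hsqle : ∀ u : HB, ∑' i, ‖S (TP.tmul u (c i))‖ ^ 2 ≤ K * ‖u‖ ^ 2 := by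
    intro u
    have h1 : ENNReal.ofReal (∑' i, ‖S (TP.tmul u (c i))‖ ^ 2)
        ≤ ENNReal.ofReal (K * ‖u‖ ^ 2) := by
      rw [ENNReal.ofReal_tsum_of_nonneg (fun i => by positivity) (hsq u)]
      calc ∑' i, ENNReal.ofReal (‖S (TP.tmul u (c i))‖ ^ 2)
          ≤ ENNReal.ofReal (‖u‖ ^ 2) * M := hbound u
        _ = ENNReal.ofReal (K * ‖u‖ ^ 2) := by
            rw [hM, ← ENNReal.ofReal_mul (by positivity), mul_comm]
    exact (ENNReal.ofReal_le_ofReal_iff (by positivity)).mp h1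
  have hsumm : ∀ u w : HB,
      Summable fun i => ⟪S (TP.tmul u (c i)), S (TP.tmul w (c i))⟫_ℂ := by
    intro u w
    apply Summable.of_norm
    refine Summable.of_nonneg_of_le (fun i => norm_nonneg _) (fun i => ?_)
      (((hsq u).add (hsq w)).div_const 2)
    show _ ≤ (‖S (TP.tmul u (c i))‖ ^ 2 + ‖S (TP.tmul w (c i))‖ ^ 2) / 2
    have h1 := norm_inner_le_norm (𝕜 := ℂ) (S (TP.tmul u (c i))) (S (TP.tmul w (c i)))
    nlinarith [sq_nonneg (‖S (TP.tmul u (c i))‖ - ‖S (TP.tmul w (c i))‖),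
      norm_nonneg (S (TP.tmul u (c i))), norm_nonneg (S (TP.tmul w (c i)))]
  have hBnorm : ∀ u w : HB,
      ‖∑' i, ⟪S (TP.tmul u (c i)), S (TP.tmul w (c i))⟫_ℂ‖ ≤ K * ‖u‖ * ‖w‖ := by
    intro u w
    obtain ⟨hab, hable⟩ := tsum_CS (a := fun i => ‖S (TP.tmul u (c i))‖)
      (b := fun i => ‖S (TP.tmul w (c i))‖) (fun i => norm_nonneg _) (fun i => norm_nonneg _)
      (hsq u) (hsq w)
    have h1 : ‖∑' i, ⟪S (TP.tmul u (c i)), S (TP.tmul w (c i))⟫_ℂ‖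
        ≤ ∑' i, ‖S (TP.tmul u (c i))‖ * ‖S (TP.tmul w (c i))‖ := by
      refine (norm_tsum_le_tsum_norm ?_).trans (Summable.tsum_le_tsum (fun i => norm_inner_le_norm _ _) ?_ hab)
      · refine Summable.of_nonneg_of_le (fun i => norm_nonneg _)
          (fun i => norm_inner_le_norm _ _) hab
      · refine Summable.of_nonneg_of_le (fun i => norm_nonneg _)
          (fun i => norm_inner_le_norm _ _) hab
    refine h1.trans (hable.trans ?_)
    have h2 : Real.sqrt (∑' i, ‖S (TP.tmul u (c i))‖ ^ 2) ≤ Real.sqrt (K * ‖u‖ ^ 2) :=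
      Real.sqrt_le_sqrt (hsqle u)
    have h3 : Real.sqrt (∑' i, ‖S (TP.tmul w (c i))‖ ^ 2) ≤ Real.sqrt (K * ‖w‖ ^ 2) :=
      Real.sqrt_le_sqrt (hsqle w)
    calc Real.sqrt (∑' i, ‖S (TP.tmul u (c i))‖ ^ 2) *
          Real.sqrt (∑' i, ‖S (TP.tmul w (c i))‖ ^ 2)
        ≤ Real.sqrt (K * ‖u‖ ^ 2) * Real.sqrt (K * ‖w‖ ^ 2) := by
          exact mul_le_mul h2 h3 (Real.sqrt_nonneg _) (Real.sqrt_nonneg _)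
      _ = K * ‖u‖ * ‖w‖ := by
          rw [Real.sqrt_mul hK0, Real.sqrt_mul hK0, Real.sqrt_sq (norm_nonneg u),
            Real.sqrt_sq (norm_nonneg w),
            show Real.sqrt K * ‖u‖ * (Real.sqrt K * ‖w‖)
              = Real.sqrt K * Real.sqrt K * (‖u‖ * ‖w‖) by ring,
            Real.mul_self_sqrt hK0]
          ring
  -- additivity in the right slot
  have htmul_add : ∀ (u u' : HB) (i : ιC),
      TP.tmul (u + u') (c i) = TP.tmul u (c i) + TP.tmul u' (c i) := by
    intro u u' i; rw [map_add]; rfl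
  have htmul_smul : ∀ (a : ℂ) (u : HB) (i : ιC),
      TP.tmul (a • u) (c i) = a • TP.tmul u (c i) := by
    intro a u i; rw [map_smul]; rfl
  -- the functional
  set ψ : HB → (HB →L[ℂ] ℂ) := fun w => LinearMap.mkContinuous
    { toFun := fun u => ∑' i, ⟪S (TP.tmul w (c i)), S (TP.tmul u (c i))⟫_ℂ
      map_add' := by
        intro u u'
        rw [← Summable.tsum_add (hsumm w u) (hsumm w u')]
        exact tsum_congr fun i => by rw [htmul_add, map_add, inner_add_right]
      map_smul' := by
        intro a u
        simp only [RingHom.id_apply]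
        rw [smul_eq_mul, ← tsum_mul_left]
        exact tsum_congr fun i => by rw [htmul_smul, map_smul, inner_smul_right] }
    (K * ‖w‖) (fun u => by
      simpa [mul_assoc, mul_comm, mul_left_comm] using hBnorm w u) with hψdef
  have hψapp : ∀ w u : HB, ψ w u = ∑' i, ⟪S (TP.tmul w (c i)), S (TP.tmul u (c i))⟫_ℂ :=
    fun w u => rfl
  set τ₀ : HB → HB := fun w => (InnerProductSpace.toDual ℂ HB).symm (ψ w) with hτ₀def
  have hτ₀ : ∀ w u : HB, ⟪τ₀ w, u⟫_ℂ = ∑' i, ⟪S (TP.tmul w (c i)), S (TP.tmul u (c i))⟫_ℂ := by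
    intro w u
    rw [hτ₀def]
    exact InnerProductSpace.toDual_symm_apply
  have hτinner : ∀ u w : HB,
      ⟪u, τ₀ w⟫_ℂ = ∑' i, ⟪S (TP.tmul u (c i)), S (TP.tmul w (c i))⟫_ℂ := by
    intro u w
    rw [← inner_conj_symm u (τ₀ w), hτ₀ w u,
      show (starRingEnd ℂ) (∑' i, ⟪S (TP.tmul w (c i)), S (TP.tmul u (c i))⟫_ℂ)
        = star (∑' i, ⟪S (TP.tmul w (c i)), S (TP.tmul u (c i))⟫_ℂ) from rfl, tsum_star]
    exact tsum_congr fun i => inner_conj_symm (S (TP.tmul u (c i))) (S (TP.tmul w (c i)))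
  -- τ as a continuous linear map
  have hτadd : ∀ w w' : HB, τ₀ (w + w') = τ₀ w + τ₀ w' := by
    intro w w'
    refine ext_inner_left ℂ fun v => ?_
    rw [inner_add_right, hτinner, hτinner, hτinner, ← Summable.tsum_add (hsumm v w) (hsumm v w')]
    exact tsum_congr fun i => by rw [htmul_add, map_add, inner_add_right]
  have hτsmul : ∀ (a : ℂ) (w : HB), τ₀ (a • w) = a • τ₀ w := by
    intro a w
    refine ext_inner_left ℂ fun v => ?_
    rw [inner_smul_right, hτinner, hτinner, ← tsum_mul_left]
    exact tsum_congr fun i => by rw [htmul_smul, map_smul, inner_smul_right]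
  set τ : HB →L[ℂ] HB := LinearMap.mkContinuous
    { toFun := τ₀
      map_add' := hτadd
      map_smul' := hτsmul } K (fun w => by
      have h1 : ‖τ₀ w‖ = ‖ψ w‖ := (InnerProductSpace.toDual ℂ HB).symm.norm_map (ψ w)
      have h2 : ‖ψ w‖ ≤ K * ‖w‖ :=
        LinearMap.mkContinuous_norm_le _ (mul_nonneg hK0 (norm_nonneg w)) _
      rw [show (K * ‖w‖ : ℝ) = K * ‖w‖ from rfl]
      exact h1 ▸ h2) with hτdef
  have hτapp : ∀ w : HB, τ w = τ₀ w := fun w => rfl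
  -- the defining identity in terms of σ
  have hkey : ∀ u w : HB,
      ⟪u, τ w⟫_ℂ = ∑' i, ⟪TP.tmul u (c i), σ (TP.tmul w (c i))⟫_ℂ := by
    intro u w
    rw [hτapp, hτinner]
    exact (tsum_congr fun i => (inner_sqrt_sqrt hσ _ _).symm)
  have hsummσ : ∀ u w : HB,
      Summable fun i => ⟪TP.tmul u (c i), σ (TP.tmul w (c i))⟫_ℂ := by
    intro u w
    exact (summable_congr fun i => (inner_sqrt_sqrt hσ _ _).symm).mp (hsumm u w)
  -- positivity
  have hτpos : τ.IsPositive := by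
    refine isPositive_of_inner_nonneg fun x => ?_
    rw [hτapp, hτinner]
    refine complex_tsum_nonneg fun i => ?_
    rw [show ⟪S (TP.tmul x (c i)), S (TP.tmul x (c i))⟫_ℂ
        = ((‖S (TP.tmul x (c i))‖ ^ 2 : ℝ) : ℂ) from
      by exact_mod_cast inner_self_eq_norm_sq_to_K (𝕜 := ℂ) _]
    exact Complex.zero_le_real.mpr (by positivity)
  -- diagonal entries
  have hdiag : ∀ j : ιB,
      RCLike.re ⟪eB j, τ (eB j)⟫_ℂ = ∑' i, ‖S (TP.tmul (eB j) (c i))‖ ^ 2 := by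
    intro j
    have h1 : ⟪eB j, τ (eB j)⟫_ℂ = ((∑' i, ‖S (TP.tmul (eB j) (c i))‖ ^ 2 : ℝ) : ℂ) := by
      rw [hτapp, hτinner, Complex.ofReal_tsum]
      exact tsum_congr fun i => by
        exact_mod_cast inner_self_eq_norm_sq_to_K (𝕜 := ℂ) (S (TP.tmul (eB j) (c i)))
    rw [h1]
    simp
  have hdiag0 : ∀ j : ιB, 0 ≤ RCLike.re ⟪eB j, τ (eB j)⟫_ℂ := by
    intro j; rw [hdiag j]; exact tsum_nonneg fun i => by positivity
  -- the product family is orthonormal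
  have hprod : Orthonormal ℂ (fun p : ιB × ιC => TP.tmul (eB p.1) (c p.2)) := by
    rw [orthonormal_iff_ite]
    intro p q
    rw [TP.inner_tmul, orthonormal_iff_ite.mp eB.orthonormal p.1 q.1, hcorth p.2 q.2]
    rcases eq_or_ne p q with rfl | hne
    · simp
    · by_cases h1 : p.1 = q.1
      · have h2 : p.2 ≠ q.2 := fun h2 => hne (Prod.ext h1 h2)
        simp [h1, h2, hne]
      · simp [h1, hne]
  -- trace-class bound in ENNReal
  have hEN : ∑' j : ιB, ENNReal.ofReal (RCLike.re ⟪eB j, τ (eB j)⟫_ℂ) ≤ M := by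
    calc ∑' j : ιB, ENNReal.ofReal (RCLike.re ⟪eB j, τ (eB j)⟫_ℂ)
        = ∑' (j : ιB) (i : ιC), ENNReal.ofReal (‖S (TP.tmul (eB j) (c i))‖ ^ 2) := by
          refine tsum_congr fun j => ?_
          rw [hdiag j, ENNReal.ofReal_tsum_of_nonneg (fun i => by positivity) (hsq (eB j))]
      _ = ∑' p : ιB × ιC, ENNReal.ofReal (‖S (TP.tmul (eB p.1) (c p.2))‖ ^ 2) :=
          (ENNReal.tsum_prod).symm
      _ ≤ M := lemA eBC hSsa hprod
  have hsummd : Summable fun j : ιB => RCLike.re ⟪eB j, τ (eB j)⟫_ℂ :=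
    summable_of_EN hdiag0 (ne_top_of_le_ne_top hMne hEN)
  have hτtc : IsTraceClass eB τ := by
    unfold IsTraceClass
    rw [absOp_of_positive hτpos]
    exact hsummd
  have hτtr : trAlong eB τ ≤ K := by
    have h1 : ENNReal.ofReal (trAlong eB τ) ≤ ENNReal.ofReal K := by
      rw [show trAlong eB τ = ∑' j, RCLike.re ⟪eB j, τ (eB j)⟫_ℂ from rfl,
        ENNReal.ofReal_tsum_of_nonneg hdiag0 hsummd, ← hM]
      exact hEN
    exact (ENNReal.ofReal_le_ofReal_iff hK0).mp h1
  exact ⟨τ, hτpos, hτtc, hτtr, hsummσ, hkey⟩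
end PT

end MEDP
end

noncomputable section

/-- Data processing inequality for the min-entropy:
`Λ(ρ_AB|B) ≤ Λ(ρ_ABC|BC)` where `ρ_AB = tr_C ρ_ABC`, equivalently
`H_min(ρ_ABC|BC) ≤ H_min(ρ_AB|B)`. -/
theorem min_entropy_data_processing
    {HA HB HC HBC HAB HABC : Type*}
    [NormedAddCommGroup HA] [InnerProductSpace ℂ HA] [TopologicalSpace.SeparableSpace HA]
    [NormedAddCommGroup HB] [InnerProductSpace ℂ HB] [CompleteSpace HB]
    [TopologicalSpace.SeparableSpace HB]
    [NormedAddCommGroup HC] [InnerProductSpace ℂ HC] [CompleteSpace HC]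
    [TopologicalSpace.SeparableSpace HC]
    [NormedAddCommGroup HBC] [InnerProductSpace ℂ HBC] [CompleteSpace HBC]
    [NormedAddCommGroup HAB] [InnerProductSpace ℂ HAB] [CompleteSpace HAB]
    [NormedAddCommGroup HABC] [InnerProductSpace ℂ HABC] [CompleteSpace HABC]
    (TBC : HilbertTensor HB HC HBC) (TABC : HilbertTensor HA HBC HABC)
    (TAB : HilbertTensor HA HB HAB)
    {ιB ιBC ιC ιABC : Type*} (eB : HilbertBasis ιB ℂ HB) (eBC : HilbertBasis ιBC ℂ HBC)
    (c : HilbertBasis ιC ℂ HC) (eABC : HilbertBasis ιABC ℂ HABC)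
    (ρABC : HABC →L[ℂ] HABC) (hpos : ρABC.IsPositive) (htc : IsTraceClass eABC ρABC)
    (ρAB : HAB →L[ℂ] HAB)
    (hptr : ∀ (x y : HA) (u w : HB),
      ⟪TAB.tmul x u, ρAB (TAB.tmul y w)⟫_ℂ
        = ∑' i, ⟪TABC.tmul x (TBC.tmul u (c i)),
            ρABC (TABC.tmul y (TBC.tmul w (c i)))⟫_ℂ) :
    LamB TAB eB ρAB ≤ LamB TABC eBC ρABC := by
  classical
  unfold LamB
  refine le_sInf fun x hx => ?_
  obtain ⟨σ, hσpos, hσtc, hσle, rfl⟩ := hx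
  obtain ⟨τ, hτpos, hτtc, hτtr, hsummσ, hkey⟩ := MEDP.exists_ptrace TBC c eBC hσpos hσtc eB
  have hRsa := MEDP.isSelfAdjoint_sqrt hpos
  set R := CFC.sqrt ρABC with hRdef
  have hMR : ∑' k, ENNReal.ofReal (‖R (eABC k)‖ ^ 2) = ENNReal.ofReal (trAlong eABC ρABC) :=
    MEDP.trace_EN eABC hpos htc
  have hMRne : (∑' k, ENNReal.ofReal (‖R (eABC k)‖ ^ 2)) ≠ ⊤ := by
    rw [hMR]; exact ENNReal.ofReal_ne_top
  have hcorth := orthonormal_iff_ite.mp c.orthonormal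
  have hposD : (TAB.map 1 τ - ρAB).IsPositive := by
    refine MEDP.isPositive_of_inner_nonneg fun z₀ => ?_
    suffices hsub : ∀ z ∈ (Submodule.span ℂ {z : HAB | ∃ a b, z = TAB.tmul a b} : Submodule ℂ HAB),
        0 ≤ ⟪z, (TAB.map 1 τ - ρAB) z⟫_ℂ by
      have hcont : Continuous fun z : HAB => ⟪z, (TAB.map 1 τ - ρAB) z⟫_ℂ :=
        continuous_id.inner (TAB.map 1 τ - ρAB).continuous
      have hCset : IsClosed {w : ℂ | 0 ≤ w} := by
        have hset : {w : ℂ | 0 ≤ w} = Complex.re ⁻¹' Set.Ici 0 ∩ Complex.im ⁻¹' {0} := by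
          ext w
          simp [Complex.le_def, eq_comm]
        rw [hset]
        exact ((isClosed_Ici).preimage Complex.continuous_re).inter
          ((isClosed_singleton).preimage Complex.continuous_im)
      have hclosed : IsClosed {z : HAB | 0 ≤ ⟪z, (TAB.map 1 τ - ρAB) z⟫_ℂ} :=
        hCset.preimage hcont
      have h1 : ((Submodule.span ℂ {z : HAB | ∃ a b, z = TAB.tmul a b} : Submodule ℂ HAB) : Set HAB)
          ⊆ {z : HAB | 0 ≤ ⟪z, (TAB.map 1 τ - ρAB) z⟫_ℂ} := fun w hw => hsub w hw
      have h3 : z₀ ∈ closure ((Submodule.span ℂ {z : HAB | ∃ a b, z = TAB.tmul a b} :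
          Submodule ℂ HAB) : Set HAB) := by
        rw [TAB.dense_span.closure_eq]; trivial
      exact hclosed.closure_subset_iff.mpr h1 h3
    intro z hz
    obtain ⟨f, hfsupp, hfsum⟩ := Submodule.mem_span_set.mp hz
    set s := f.support with hsdef
    have hch : ∀ y ∈ s, ∃ p : HA × HB, y = TAB.tmul p.1 p.2 := by
      intro y hy
      obtain ⟨aa, bb, hab⟩ := hfsupp hy
      exact ⟨⟨aa, bb⟩, hab⟩
    set a : HAB → HA := fun y =>
      if h : ∃ p : HA × HB, y = TAB.tmul p.1 p.2 then f y • h.choose.1 else 0 with hadef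
    set b : HAB → HB := fun y =>
      if h : ∃ p : HA × HB, y = TAB.tmul p.1 p.2 then h.choose.2 else 0 with hbdef
    have hyab : ∀ y ∈ s, TAB.tmul (a y) (b y) = f y • y := by
      intro y hy
      have h := hch y hy
      simp only [hadef, hbdef, dif_pos h]
      rw [map_smul, LinearMap.smul_apply, ← h.choose_spec]
    have hzdecomp : z = ∑ y ∈ s, TAB.tmul (a y) (b y) := by
      rw [← hfsum, Finsupp.sum]
      exact (Finset.sum_congr rfl fun y hy => hyab y hy).symm
    set W : HAB → ιC → HABC := fun y i => TABC.tmul (a y) (TBC.tmul (b y) (c i)) with hWdef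
    have hWinner : ∀ (y y' : HAB) (i i' : ιC),
        ⟪W y i, W y' i'⟫_ℂ = ⟪a y, a y'⟫_ℂ * ⟪b y, b y'⟫_ℂ * ⟪c i, c i'⟫_ℂ := by
      intro y y' i i'
      simp only [hWdef]
      rw [TABC.inner_tmul, TBC.inner_tmul]
      ring
    have hWsq : ∀ y : HAB, Summable fun i => ‖R (W y i)‖ ^ 2 := by
      intro y
      have hb : ∑' i, ENNReal.ofReal (‖R (W y i)‖ ^ 2)
          ≤ ENNReal.ofReal (‖a y‖ ^ 2 * ‖b y‖ ^ 2)
            * ∑' k, ENNReal.ofReal (‖R (eABC k)‖ ^ 2) := by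
        refine MEDP.lemA' eABC hRsa (r := ‖a y‖ ^ 2 * ‖b y‖ ^ 2) (fun i => ?_)
          (fun i i' hne => ?_)
        · rw [hWinner, hcorth i i, if_pos rfl, mul_one,
            show ⟪a y, a y⟫_ℂ = ((‖a y‖ ^ 2 : ℝ) : ℂ) from by
              exact_mod_cast inner_self_eq_norm_sq_to_K (𝕜 := ℂ) (a y),
            show ⟪b y, b y⟫_ℂ = ((‖b y‖ ^ 2 : ℝ) : ℂ) from by
              exact_mod_cast inner_self_eq_norm_sq_to_K (𝕜 := ℂ) (b y)]
          norm_cast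
        · rw [hWinner, hcorth i i', if_neg hne, mul_zero]
      exact MEDP.summable_of_EN (fun i => by positivity)
        (ne_top_of_le_ne_top (ENNReal.mul_ne_top ENNReal.ofReal_ne_top hMRne) hb)
    have hsumρ : ∀ y y' : HAB, Summable fun i => ⟪W y i, ρABC (W y' i)⟫_ℂ := by
      intro y y'
      have heq : ∀ i, ⟪W y i, ρABC (W y' i)⟫_ℂ = ⟪R (W y i), R (W y' i)⟫_ℂ :=
        fun i => MEDP.inner_sqrt_sqrt hpos _ _
      rw [summable_congr heq]
      apply Summable.of_norm
      refine Summable.of_nonneg_of_le (fun i => norm_nonneg _) (fun i => ?_)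
        (((hWsq y).add (hWsq y')).div_const 2)
      show _ ≤ (‖R (W y i)‖ ^ 2 + ‖R (W y' i)‖ ^ 2) / 2
      have h1 := norm_inner_le_norm (𝕜 := ℂ) (R (W y i)) (R (W y' i))
      nlinarith [sq_nonneg (‖R (W y i)‖ - ‖R (W y' i)‖)]
    have hWσ : ∀ (y y' : HAB) (i : ιC),
        ⟪W y i, (TABC.map 1 σ) (W y' i)⟫_ℂ
          = ⟪a y, a y'⟫_ℂ * ⟪TBC.tmul (b y) (c i), σ (TBC.tmul (b y') (c i))⟫_ℂ := by
      intro y y' i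
      simp only [hWdef]
      rw [TABC.map_tmul, ContinuousLinearMap.one_apply, TABC.inner_tmul]
    have hsumσ' : ∀ y y' : HAB, Summable fun i => ⟪W y i, (TABC.map 1 σ) (W y' i)⟫_ℂ := by
      intro y y'
      rw [summable_congr (hWσ y y')]
      exact (hsummσ (b y) (b y')).mul_left _
    have hquad : ∀ i : ιC, ∀ T : HABC →L[ℂ] HABC,
        ⟪∑ y ∈ s, W y i, T (∑ y ∈ s, W y i)⟫_ℂ
          = ∑ y ∈ s, ∑ y' ∈ s, ⟪W y i, T (W y' i)⟫_ℂ := by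
      intro i T
      rw [map_sum, sum_inner]
      exact Finset.sum_congr rfl fun y _ => by rw [inner_sum]
    have hz1 : ⟪z, ρAB z⟫_ℂ = ∑' i, ⟪∑ y ∈ s, W y i, ρABC (∑ y ∈ s, W y i)⟫_ℂ := by
      conv_lhs => rw [hzdecomp]
      rw [map_sum, sum_inner]
      have step1 : ∀ y ∈ s,
          ⟪TAB.tmul (a y) (b y), ∑ y' ∈ s, ρAB (TAB.tmul (a y') (b y'))⟫_ℂ
            = ∑ y' ∈ s, ∑' i, ⟪W y i, ρABC (W y' i)⟫_ℂ := by
        intro y hy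
        rw [inner_sum]
        exact Finset.sum_congr rfl fun y' hy' => hptr (a y) (a y') (b y) (b y')
      rw [Finset.sum_congr rfl step1,
        Finset.sum_congr rfl (fun y hy => (Summable.tsum_finsetSum (fun y' _ => hsumρ y y')).symm),
        ← Summable.tsum_finsetSum (fun y _ => summable_sum fun y' _ => hsumρ y y')]
      exact tsum_congr fun i => (hquad i ρABC).symm
    have hz2 : ⟪z, (TAB.map 1 τ) z⟫_ℂ
        = ∑' i, ⟪∑ y ∈ s, W y i, (TABC.map 1 σ) (∑ y ∈ s, W y i)⟫_ℂ := by
      conv_lhs => rw [hzdecomp]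
      rw [map_sum, sum_inner]
      have step1 : ∀ y ∈ s,
          ⟪TAB.tmul (a y) (b y), ∑ y' ∈ s, (TAB.map 1 τ) (TAB.tmul (a y') (b y'))⟫_ℂ
            = ∑ y' ∈ s, ∑' i, ⟪W y i, (TABC.map 1 σ) (W y' i)⟫_ℂ := by
        intro y hy
        rw [inner_sum]
        refine Finset.sum_congr rfl fun y' hy' => ?_
        rw [TAB.map_tmul, ContinuousLinearMap.one_apply, TAB.inner_tmul, hkey (b y) (b y'),
          ← tsum_mul_left]
        exact tsum_congr fun i => (hWσ y y' i).symm
      rw [Finset.sum_congr rfl step1,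
        Finset.sum_congr rfl (fun y hy => (Summable.tsum_finsetSum (fun y' _ => hsumσ' y y')).symm),
        ← Summable.tsum_finsetSum (fun y _ => summable_sum fun y' _ => hsumσ' y y')]
      exact tsum_congr fun i => (hquad i (TABC.map 1 σ)).symm
    have hsumZρ : Summable fun i => ⟪∑ y ∈ s, W y i, ρABC (∑ y ∈ s, W y i)⟫_ℂ := by
      rw [summable_congr fun i => hquad i ρABC]
      exact summable_sum fun y _ => summable_sum fun y' _ => hsumρ y y'
    have hsumZσ : Summable fun i => ⟪∑ y ∈ s, W y i, (TABC.map 1 σ) (∑ y ∈ s, W y i)⟫_ℂ := by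
      rw [summable_congr fun i => hquad i (TABC.map 1 σ)]
      exact summable_sum fun y _ => summable_sum fun y' _ => hsumσ' y y'
    show 0 ≤ ⟪z, (TAB.map 1 τ - ρAB) z⟫_ℂ
    rw [ContinuousLinearMap.sub_apply, inner_sub_right, hz1, hz2,
      ← Summable.tsum_sub hsumZσ hsumZρ]
    refine MEDP.complex_tsum_nonneg fun i => ?_
    have hD : ((TABC.map 1 σ) - ρABC).IsPositive :=
      (ContinuousLinearMap.le_def ρABC (TABC.map 1 σ)).mp hσle
    have hnn := MEDP.inner_nonneg_of_isPositive hD (∑ y ∈ s, W y i)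
    rwa [ContinuousLinearMap.sub_apply, inner_sub_right] at hnn
  have hle : ρAB ≤ TAB.map 1 τ := (ContinuousLinearMap.le_def ρAB (TAB.map 1 τ)).mpr hposD
  have hmem : ((trAlong eB τ : ℝ) : EReal) ∈ {x : EReal | ∃ σ' : HB →L[ℂ] HB,
      σ'.IsPositive ∧ IsTraceClass eB σ' ∧ ρAB ≤ TAB.map 1 σ' ∧
        x = ((trAlong eB σ' : ℝ) : EReal)} := ⟨τ, hτpos, hτtc, hle, rfl⟩
  exact sInf_le_of_le hmem (by exact_mod_cast hτtr)

end
end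

section
/- Monotonicity under projection: let ρ_AB be a density operator on H_A ⊗ H_B and σ_B a density operator on H_B; let P_k^A ≤ P_{k'}^A and P_k^B ≤ P_{k'}^B (k ≤ k') be increasing sequences of finite-rank orthogonal projections, and set ρ_AB^k = (P_k^A ⊗ P_k^B) ρ_AB (P_k^A ⊗ P_k^B), σ_B^k = P_k^B σ_B P_k^B. Then Λ(ρ_AB^k|σ_B^k) := inf{λ : λ P_k^A ⊗ σ_B^k ≥ ρ_AB^k} is monotonically increasing in k and bounded above by Λ(ρ_AB|σ_B) = inf{λ : λ id_A ⊗ σ_B ≥ ρ_AB}. -/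
open scoped InnerProductSpace ComplexOrder
open ContinuousLinearMap Filter Topology

set_option synthInstance.maxHeartbeats 1000000
set_option maxHeartbeats 1600000

noncomputable section


section Aux

set_option linter.unusedSectionVars false

variable {HA HB H : Type*} [NormedAddCommGroup HA] [InnerProductSpace ℂ HA] [CompleteSpace HA]
    [NormedAddCommGroup HB] [InnerProductSpace ℂ HB] [CompleteSpace HB]
    [NormedAddCommGroup H] [InnerProductSpace ℂ H] [CompleteSpace H]

lemma HT.clm_ext (TP : HilbertTensor HA HB H) {F G : H →L[ℂ] H}
    (h : ∀ a b, F (TP.tmul a b) = G (TP.tmul a b)) : F = G := by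
  have hs : Set.EqOn F G
      ((Submodule.span ℂ {z : H | ∃ a b, z = TP.tmul a b} : Submodule ℂ H) : Set H) := by
    intro x hx
    induction hx using Submodule.span_induction with
    | mem x hx => obtain ⟨a, b, rfl⟩ := hx; exact h a b
    | zero => simp
    | add x y _ _ hx hy => simp [map_add, hx, hy]
    | smul c x _ hx => simp [map_smul, hx]
  ext x
  exact Continuous.ext_on TP.dense_span F.continuous G.continuous hs ▸ rfl

lemma HT.map_comp (TP : HilbertTensor HA HB H) (S S' : HA →L[ℂ] HA) (T T' : HB →L[ℂ] HB) :
    TP.map S T ∘L TP.map S' T' = TP.map (S ∘L S') (T ∘L T') := by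
  apply HT.clm_ext TP
  intro a b
  simp [TP.map_tmul]

lemma HT.vec_ext (TP : HilbertTensor HA HB H) {u : H}
    (h : ∀ a b, ⟪TP.tmul a b, u⟫_ℂ = 0) : u = 0 := by
  have hs : ∀ w ∈ (Submodule.span ℂ {z : H | ∃ a b, z = TP.tmul a b} : Submodule ℂ H),
      ⟪w, u⟫_ℂ = 0 := by
    intro w hw
    induction hw using Submodule.span_induction with
    | mem x hx => obtain ⟨a, b, rfl⟩ := hx; exact h a b
    | zero => simp
    | add x y _ _ hx hy => rw [inner_add_left, hx, hy]; ring
    | smul c x _ hx => rw [inner_smul_left, hx]; ring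
  have hc : Continuous fun w : H => ⟪w, u⟫_ℂ :=
    continuous_inner.comp (continuous_id.prodMk continuous_const)
  have heq : (fun w : H => ⟪w, u⟫_ℂ) = fun _ => (0 : ℂ) :=
    Continuous.ext_on TP.dense_span hc continuous_const hs
  have h0 : ⟪u, u⟫_ℂ = 0 := congrFun heq u
  rwa [inner_self_eq_zero] at h0

lemma HT.map_adjoint (TP : HilbertTensor HA HB H) (S : HA →L[ℂ] HA) (T : HB →L[ℂ] HB) :
    ContinuousLinearMap.adjoint (TP.map S T)
      = TP.map (ContinuousLinearMap.adjoint S) (ContinuousLinearMap.adjoint T) := by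
  symm
  apply HT.clm_ext TP
  intro a b
  rw [← sub_eq_zero]
  apply HT.vec_ext TP
  intro a' b'
  rw [inner_sub_right, TP.map_tmul, TP.inner_tmul,
    ContinuousLinearMap.adjoint_inner_right (TP.map S T), TP.map_tmul, TP.inner_tmul,
    ContinuousLinearMap.adjoint_inner_right, ContinuousLinearMap.adjoint_inner_right,
    sub_self]

lemma HT.conj_le {A B Q : H →L[ℂ] H} (hQ : ContinuousLinearMap.adjoint Q = Q) (h : A ≤ B) :
    Q ∘L A ∘L Q ≤ Q ∘L B ∘L Q := by
  rw [ContinuousLinearMap.le_def] at h ⊢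
  have h2 := h.conj_adjoint Q
  rw [hQ] at h2
  convert h2 using 1
  ext x
  simp [ContinuousLinearMap.comp_apply, ContinuousLinearMap.sub_apply, map_sub]

end Aux

/-- `Λ(ρ_AB^k|σ_B^k)` is monotonically increasing in `k` and bounded
above by `Λ(ρ_AB|σ_B)`. -/
theorem LamCond_projected_monotone
    {HA HB H : Type*} [NormedAddCommGroup HA] [InnerProductSpace ℂ HA] [CompleteSpace HA]
    [TopologicalSpace.SeparableSpace HA]
    [NormedAddCommGroup HB] [InnerProductSpace ℂ HB] [CompleteSpace HB]
    [TopologicalSpace.SeparableSpace HB]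
    [NormedAddCommGroup H] [InnerProductSpace ℂ H] [CompleteSpace H]
    [TopologicalSpace.SeparableSpace H]
    (TP : HilbertTensor HA HB H)
    {ι κ : Type*} (e : HilbertBasis ι ℂ H) (f : HilbertBasis κ ℂ HB)
    (ρ : H →L[ℂ] H) (σ : HB →L[ℂ] HB)
    (hρ : ρ.IsPositive) (hρtc : IsTraceClass e ρ) (hρtr : trAlong e ρ = 1)
    (hσ : σ.IsPositive) (hσtc : IsTraceClass f σ) (hσtr : trAlong f σ = 1)
    (PA : ℕ → HA →L[ℂ] HA) (PB : ℕ → HB →L[ℂ] HB)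
    (hPA : ∀ k, IsOrthoProj (PA k)) (hPB : ∀ k, IsOrthoProj (PB k))
    (hfinA : ∀ k, FiniteDimensional ℂ (LinearMap.range ((PA k : HA →ₗ[ℂ] HA))))
    (hfinB : ∀ k, FiniteDimensional ℂ (LinearMap.range ((PB k : HB →ₗ[ℂ] HB))))
    (hmonoA : ∀ k k', k ≤ k' → PA k' ∘L PA k = PA k)
    (hmonoB : ∀ k k', k ≤ k' → PB k' ∘L PB k = PB k) :
    Monotone (fun k => sInf {x : EReal | ∃ l : ℝ, x = (l : EReal) ∧
        TP.map (PA k) (PB k) ∘L ρ ∘L TP.map (PA k) (PB k)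
          ≤ l • TP.map (PA k) (PB k ∘L σ ∘L PB k)}) ∧
    ∀ k, sInf {x : EReal | ∃ l : ℝ, x = (l : EReal) ∧
        TP.map (PA k) (PB k) ∘L ρ ∘L TP.map (PA k) (PB k)
          ≤ l • TP.map (PA k) (PB k ∘L σ ∘L PB k)}
      ≤ LamCond TP ρ σ := by
  set Q : ℕ → H →L[ℂ] H := fun k => TP.map (PA k) (PB k) with hQdef
  have hQadj : ∀ k, ContinuousLinearMap.adjoint (Q k) = Q k := by
    intro k
    rw [hQdef, HT.map_adjoint, (hPA k).1.adjoint_eq, (hPB k).1.adjoint_eq]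
  have hmonoA' : ∀ k k', k ≤ k' → PA k ∘L PA k' = PA k := by
    intro k k' hk
    have h := congrArg ContinuousLinearMap.adjoint (hmonoA k k' hk)
    rwa [ContinuousLinearMap.adjoint_comp, (hPA k).1.adjoint_eq, (hPA k').1.adjoint_eq] at h
  have hmonoB' : ∀ k k', k ≤ k' → PB k ∘L PB k' = PB k := by
    intro k k' hk
    have h := congrArg ContinuousLinearMap.adjoint (hmonoB k k' hk)
    rwa [ContinuousLinearMap.adjoint_comp, (hPB k).1.adjoint_eq, (hPB k').1.adjoint_eq] at h
  -- conjugating the level-k' inequality (or the untruncated one) gives the level-k inequality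
  have key : ∀ k k' (l : ℝ), k ≤ k' →
      TP.map (PA k') (PB k') ∘L ρ ∘L TP.map (PA k') (PB k')
        ≤ l • TP.map (PA k') (PB k' ∘L σ ∘L PB k') →
      TP.map (PA k) (PB k) ∘L ρ ∘L TP.map (PA k) (PB k)
        ≤ l • TP.map (PA k) (PB k ∘L σ ∘L PB k) := by
    intro k k' l hk h
    have pA : ∀ x, PA k' (PA k x) = PA k x := fun x => DFunLike.congr_fun (hmonoA k k' hk) x
    have pA' : ∀ x, PA k (PA k' x) = PA k x := fun x => DFunLike.congr_fun (hmonoA' k k' hk) x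
    have pB : ∀ x, PB k' (PB k x) = PB k x := fun x => DFunLike.congr_fun (hmonoB k k' hk) x
    have pB' : ∀ x, PB k (PB k' x) = PB k x := fun x => DFunLike.congr_fun (hmonoB' k k' hk) x
    have hQQ : Q k' ∘L Q k = Q k := by
      rw [hQdef, HT.map_comp, hmonoA k k' hk, hmonoB k k' hk]
    have hQQ' : Q k ∘L Q k' = Q k := by
      rw [hQdef, HT.map_comp, hmonoA' k k' hk, hmonoB' k k' hk]
    have pQ : ∀ x, Q k' (Q k x) = Q k x := fun x => DFunLike.congr_fun hQQ x
    have pQ' : ∀ x, Q k (Q k' x) = Q k x := fun x => DFunLike.congr_fun hQQ' x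
    have h2 := HT.conj_le (hQadj k) h
    have hL : Q k ∘L (TP.map (PA k') (PB k') ∘L ρ ∘L TP.map (PA k') (PB k')) ∘L Q k
        = TP.map (PA k) (PB k) ∘L ρ ∘L TP.map (PA k) (PB k) := by
      ext x
      simp only [ContinuousLinearMap.comp_apply, hQdef] at pQ pQ' ⊢
      rw [pQ, pQ']
    have hR : Q k ∘L (l • TP.map (PA k') (PB k' ∘L σ ∘L PB k')) ∘L Q k
        = l • TP.map (PA k) (PB k ∘L σ ∘L PB k) := by
      have hmid : Q k ∘L TP.map (PA k') (PB k' ∘L σ ∘L PB k') ∘L Q k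
          = TP.map (PA k) (PB k ∘L σ ∘L PB k) := by
        rw [hQdef, HT.map_comp, HT.map_comp]
        congr 1
        · ext x
          simp only [ContinuousLinearMap.comp_apply, pA, pA']
          exact DFunLike.congr_fun (hPA k).2.eq x
        · ext x
          simp only [ContinuousLinearMap.comp_apply, pB, pB']
      rw [← hmid]
      ext x
      simp [ContinuousLinearMap.comp_apply]
    rw [hL, hR] at h2
    exact h2
  have key0 : ∀ k (l : ℝ), ρ ≤ l • TP.map 1 σ →
      TP.map (PA k) (PB k) ∘L ρ ∘L TP.map (PA k) (PB k)
        ≤ l • TP.map (PA k) (PB k ∘L σ ∘L PB k) := by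
    intro k l h
    have h2 := HT.conj_le (hQadj k) h
    have hR : Q k ∘L (l • TP.map 1 σ) ∘L Q k = l • TP.map (PA k) (PB k ∘L σ ∘L PB k) := by
      have hmid : Q k ∘L TP.map 1 σ ∘L Q k = TP.map (PA k) (PB k ∘L σ ∘L PB k) := by
        rw [hQdef, HT.map_comp, HT.map_comp]
        congr 1
        · ext x
          simp only [ContinuousLinearMap.comp_apply, ContinuousLinearMap.one_apply]
          exact DFunLike.congr_fun (hPA k).2.eq x
      rw [← hmid]
      ext x
      simp [ContinuousLinearMap.comp_apply]
    rw [hR] at h2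
    exact h2
  constructor
  · intro k k' hk
    apply sInf_le_sInf
    rintro x ⟨l, rfl, hl⟩
    exact ⟨l, rfl, key k k' l hk hl⟩
  · intro k
    apply sInf_le_sInf
    rintro x ⟨l, rfl, hl⟩
    exact ⟨l, rfl, key0 k l hl⟩


end
end
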